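/- arXiv:1209.5575 — 5 statements merged into one kernel-verified Lean document; each statement's English description precedes it below -/
import Mathlib

section
/- Let A ⊆ ℤ with a_n = max_{x∈ℤ} |A ∩ [x+1, x+n]|, and suppose sup_n n·(a_n/n − α) = +∞ for some real α ∈ [0,1]. If B ⊆ ℤ has upper Banach density BD(B) ≥ 1 − α, then the difference set A − B is thick. -/
open Filter Set Pointwise

/-- `maxCount A n` = max over `x ∈ ℤ` of `|A ∩ [x+1, x+n]|`. -/
noncomputable def maxCount (A : Set ℤ) (n : ℕ) : ℕ :=
  sSup {c : ℕ | ∃ x : ℤ, c = (A ∩ Set.Icc (x + 1) (x + n)).ncard}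

/-- Upper Banach density of a set of integers. -/
noncomputable def BD (A : Set ℤ) : ℝ :=
  ⨅ n : ℕ+, (maxCount A (n : ℕ) : ℝ) / (n : ℕ)

def Thick (A : Set ℤ) : Prop :=
  ∀ k : ℕ, ∃ y : ℤ, Set.Icc (y + 1) (y + k) ⊆ A

def Syndetic (A : Set ℤ) : Prop :=
  ∃ k : ℕ, ∀ x : ℤ, (A ∩ Set.Icc (x + 1) (x + k)).Nonempty

lemma ncard_int_Icc (a b : ℤ) : (Set.Icc a b).ncard = (b + 1 - a).toNat := by
  rw [← Finset.coe_Icc, Set.ncard_coe_finset, Int.card_Icc]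

lemma ncard_window (x : ℤ) (n : ℕ) : (Set.Icc (x + 1) (x + n)).ncard = n := by
  rw [ncard_int_Icc]; omega

lemma ncard_inter_window_le (A : Set ℤ) (x : ℤ) (n : ℕ) :
    (A ∩ Set.Icc (x + 1) (x + n)).ncard ≤ n := by
  calc (A ∩ Set.Icc (x + 1) (x + n)).ncard
      ≤ (Set.Icc (x + 1) (x + n)).ncard :=
        Set.ncard_le_ncard Set.inter_subset_right (Set.finite_Icc _ _)
    _ = n := ncard_window x n

lemma maxCount_exists (A : Set ℤ) (n : ℕ) :
    ∃ x : ℤ, maxCount A n = (A ∩ Set.Icc (x + 1) (x + n)).ncard := by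
  have hne : {c : ℕ | ∃ x : ℤ, c = (A ∩ Set.Icc (x + 1) (x + n)).ncard}.Nonempty :=
    ⟨_, 0, rfl⟩
  have hbdd : BddAbove {c : ℕ | ∃ x : ℤ, c = (A ∩ Set.Icc (x + 1) (x + n)).ncard} := by
    refine ⟨n, ?_⟩
    rintro c ⟨x, rfl⟩
    exact ncard_inter_window_le A x n
  exact Nat.sSup_mem hne hbdd

theorem diff_thick_of_unbounded_excess (A B : Set ℤ) (α : ℝ)
    (hα : α ∈ Set.Icc (0 : ℝ) 1)
    (hA : ∀ M : ℝ, ∃ n : ℕ+, M < (n : ℝ) * ((maxCount A (n : ℕ) : ℝ) / (n : ℕ) - α))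
    (hB : BD B ≥ 1 - α) :
    Thick (A - B) := by
  intro k
  obtain ⟨n, hn⟩ := hA k
  have hnpos : (0 : ℝ) < (n : ℕ) := by exact_mod_cast n.pos
  -- `hn` says k < a_n - α n
  have hSgt : (k : ℝ) + α * (n : ℕ) < (maxCount A (n : ℕ) : ℝ) := by
    have : (n : ℝ) * ((maxCount A (n : ℕ) : ℝ) / (n : ℕ) - α)
        = (maxCount A (n : ℕ) : ℝ) - α * (n : ℕ) := by
      field_simp
    rw [this] at hn
    linarith
  -- B has a dense window
  have hTge : (1 - α) * (n : ℕ) ≤ (maxCount B (n : ℕ) : ℝ) := by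
    have hbdd : BddBelow (Set.range fun m : ℕ+ => (maxCount B (m : ℕ) : ℝ) / (m : ℕ)) := by
      refine ⟨0, ?_⟩
      rintro r ⟨m, rfl⟩
      positivity
    have h1 : BD B ≤ (maxCount B (n : ℕ) : ℝ) / (n : ℕ) := ciInf_le hbdd n
    have h2 : 1 - α ≤ (maxCount B (n : ℕ) : ℝ) / (n : ℕ) := le_trans hB h1
    calc (1 - α) * (n : ℕ) ≤ ((maxCount B (n : ℕ) : ℝ) / (n : ℕ)) * (n : ℕ) := by
          exact mul_le_mul_of_nonneg_right h2 (le_of_lt hnpos)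
      _ = (maxCount B (n : ℕ) : ℝ) := by field_simp
  obtain ⟨x, hx⟩ := maxCount_exists A (n : ℕ)
  obtain ⟨z, hz⟩ := maxCount_exists B (n : ℕ)
  set S : Set ℤ := A ∩ Set.Icc (x + 1) (x + (n : ℕ)) with hSdef
  set T : Set ℤ := B ∩ Set.Icc (z + 1) (z + (n : ℕ)) with hTdef
  have hSfin : S.Finite := (Set.finite_Icc _ _).inter_of_right _
  have hTfin : T.Finite := (Set.finite_Icc _ _).inter_of_right _
  -- total count
  have hsum : (n : ℕ) + k < S.ncard + T.ncard := by
    have : ((n : ℕ) : ℝ) + (k : ℝ) < (S.ncard : ℝ) + (T.ncard : ℝ) := by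
      rw [← hx, ← hz]
      nlinarith
    exact_mod_cast this
  refine ⟨x - z, ?_⟩
  intro m hm
  -- show m ∈ A - B
  set T' : Set ℤ := (fun b => b + m) '' T with hT'def
  have hT'fin : T'.Finite := hTfin.image _
  have hT'card : T'.ncard = T.ncard :=
    Set.ncard_image_of_injective _ (add_left_injective m)
  have hScard_sub : S ⊆ Set.Icc (x + 1) (x + (n : ℕ) + k) := by
    intro a ha
    have := ha.2
    simp only [Set.mem_Icc] at this ⊢
    omega
  have hT'sub : T' ⊆ Set.Icc (x + 1) (x + (n : ℕ) + k) := by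
    rintro _ ⟨b, hb, rfl⟩
    have hb2 := hb.2
    simp only [Set.mem_Icc] at hb2 hm ⊢
    omega
  have hne : (S ∩ T').Nonempty := by
    by_contra h
    have hdisj : Disjoint S T' := by
      rw [Set.not_nonempty_iff_eq_empty] at h
      exact Set.disjoint_iff_inter_eq_empty.mpr h
    have hunion : (S ∪ T').ncard = S.ncard + T'.ncard :=
      Set.ncard_union_eq hdisj hSfin hT'fin
    have hle : (S ∪ T').ncard ≤ (Set.Icc (x + 1) (x + (n : ℕ) + k)).ncard :=
      Set.ncard_le_ncard (Set.union_subset hScard_sub hT'sub) (Set.finite_Icc _ _)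
    have hIcc : (Set.Icc (x + 1) (x + (n : ℕ) + k)).ncard = (n : ℕ) + k := by
      rw [ncard_int_Icc]; omega
    rw [hunion, hT'card, hIcc] at hle
    omega
  obtain ⟨a, haS, haT'⟩ := hne
  obtain ⟨b, hbT, hab⟩ := haT'
  exact Set.mem_sub.mpr ⟨a, haS.1, b, hbT.1, by simp only [] at hab; omega⟩
end

section
/- Let N, n ∈ ℕ, C ⊆ [1, N], and D ⊆ [1, n] be finite sets of integers. Then there exists z ∈ ℤ such that |(C − z) ∩ D|/n ≥ (|C|/N)·(|D|/n) − |D|/N. -/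
open Filter Set Pointwise

theorem shifting_lemma (N n : ℕ) (hN : 0 < N) (hn : 0 < n)
    (C D : Set ℤ) (hC : C ⊆ Set.Icc 1 (N : ℤ)) (hD : D ⊆ Set.Icc 1 (n : ℤ)) :
    ∃ z : ℤ, (((fun c => c - z) '' C ∩ D).ncard : ℝ) / n ≥
      ((C.ncard : ℝ) / N) * ((D.ncard : ℝ) / n) - (D.ncard : ℝ) / N := by
  have hCfin : C.Finite := (Set.finite_Icc 1 (N : ℤ)).subset hC
  have hDfin : D.Finite := (Set.finite_Icc 1 (n : ℤ)).subset hD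
  set Cf := hCfin.toFinset with hCfdef
  set Df := hDfin.toFinset with hDfdef
  have hCmem : ∀ c ∈ Cf, 1 ≤ c ∧ c ≤ (N : ℤ) := by
    intro c hc
    have := hC (hCfin.mem_toFinset.mp hc)
    exact ⟨this.1, this.2⟩
  have hDmem : ∀ d ∈ Df, 1 ≤ d ∧ d ≤ (n : ℤ) := by
    intro d hd
    have := hD (hDfin.mem_toFinset.mp hd)
    exact ⟨this.1, this.2⟩
  set I : Finset ℤ := Finset.Icc (1 - (n : ℤ)) ((N : ℤ) - 1) with hIdef
  have hIcard : I.card = N + n - 1 := by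
    rw [hIdef, Int.card_Icc]; omega
  have hInonempty : I.Nonempty := by
    rw [hIdef]; refine Finset.nonempty_Icc.mpr (by omega)
  -- pointwise count equals a Finset card
  have hcount : ∀ z : ℤ, ((fun c => c - z) '' C ∩ D).ncard
      = (Df.filter (fun d => d + z ∈ Cf)).card := by
    intro z
    have hset : (fun c => c - z) '' C ∩ D = ↑(Df.filter (fun d => d + z ∈ Cf)) := by
      ext d
      simp only [Set.mem_inter_iff, Set.mem_image, Finset.coe_filter, Set.mem_setOf_eq,
        Finset.mem_coe, hDfdef, hCfdef, hDfin.mem_toFinset, hCfin.mem_toFinset]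
      constructor
      · rintro ⟨⟨c, hc, rfl⟩, hd⟩
        exact ⟨hd, by simpa using hc⟩
      · rintro ⟨hd, hc⟩
        exact ⟨⟨d + z, hc, by ring⟩, hd⟩
    rw [hset, Set.ncard_coe_finset]
  -- the double counting
  have hsum : ∑ z ∈ I, (Df.filter (fun d => d + z ∈ Cf)).card = Cf.card * Df.card := by
    have : ∀ z ∈ I, (Df.filter (fun d => d + z ∈ Cf)).card
        = ∑ d ∈ Df, if d + z ∈ Cf then 1 else 0 := by
      intro z _; rw [Finset.card_filter]
    rw [Finset.sum_congr rfl this, Finset.sum_comm]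
    have hdrow : ∀ d ∈ Df, ∑ z ∈ I, (if d + z ∈ Cf then 1 else 0) = Cf.card := by
      intro d hd
      rw [← Finset.card_filter]
      apply Finset.card_bij (fun z _ => d + z)
      · intro z hz
        exact (Finset.mem_filter.mp hz).2
      · intro z1 h1 z2 h2 h
        omega
      · intro c hc
        refine ⟨c - d, Finset.mem_filter.mpr ⟨?_, by simpa using hc⟩, by ring⟩
        have h1 := hCmem c hc
        have h2 := hDmem d hd
        rw [hIdef, Finset.mem_Icc]; omega
    rw [Finset.sum_congr rfl hdrow, Finset.sum_const, smul_eq_mul, mul_comm]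
  -- averaging
  obtain ⟨z, hzI, hz⟩ : ∃ z ∈ I, Cf.card * Df.card ≤ (N + n - 1) * (Df.filter (fun d => d + z ∈ Cf)).card := by
    refine Finset.exists_le_of_sum_le hInonempty (le_of_eq ?_)
    calc ∑ _z ∈ I, Cf.card * Df.card = I.card * (Cf.card * Df.card) := by
          rw [Finset.sum_const, smul_eq_mul]
      _ = (N + n - 1) * ∑ z ∈ I, (Df.filter (fun d => d + z ∈ Cf)).card := by
          rw [hsum, hIcard]
      _ = ∑ z ∈ I, (N + n - 1) * (Df.filter (fun d => d + z ∈ Cf)).card := by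
          rw [Finset.mul_sum]
  refine ⟨z, ?_⟩
  -- cardinality bounds
  have hCcard : C.ncard = Cf.card := Set.ncard_eq_toFinset_card C hCfin
  have hDcard : D.ncard = Df.card := Set.ncard_eq_toFinset_card D hDfin
  have hCle : Cf.card ≤ N := by
    have : Cf ⊆ Finset.Icc (1 : ℤ) (N : ℤ) := by
      intro c hc; rw [Finset.mem_Icc]; exact hCmem c hc
    calc Cf.card ≤ (Finset.Icc (1 : ℤ) (N : ℤ)).card := Finset.card_le_card this
      _ = N := by rw [Int.card_Icc]; omega
  have hDle : Df.card ≤ n := by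
    have : Df ⊆ Finset.Icc (1 : ℤ) (n : ℤ):= by
      intro d hd; rw [Finset.mem_Icc]; exact hDmem d hd
    calc Df.card ≤ (Finset.Icc (1 : ℤ) (n : ℤ)).card := Finset.card_le_card this
      _ = n := by rw [Int.card_Icc]; omega
  -- real arithmetic
  set k : ℕ := (Df.filter (fun d => d + z ∈ Cf)).card with hk
  rw [hcount z, hCcard, hDcard]
  have hNpos : (0 : ℝ) < N := by exact_mod_cast hN
  have hnpos : (0 : ℝ) < n := by exact_mod_cast hn
  have hzR : (Cf.card : ℝ) * Df.card ≤ ((N : ℝ) + n - 1) * k := by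
    have h0 : ((Cf.card * Df.card : ℕ) : ℝ) ≤ (((N + n - 1) * k : ℕ) : ℝ) := by
      exact_mod_cast hz
    push_cast [Nat.cast_sub (by omega : 1 ≤ N + n)] at h0
    convert h0 using 2 <;> push_cast <;> ring
  have hCleR : (Cf.card : ℝ) ≤ N := by exact_mod_cast hCle
  have hDleR : (Df.card : ℝ) ≤ n := by exact_mod_cast hDle
  have hkey : (Cf.card : ℝ) * Df.card - n * Df.card ≤ N * k := by
    have hDf0 : (0:ℝ) ≤ (Df.card : ℝ) := by positivity
    have hk0 : (0:ℝ) ≤ (k : ℝ) := by positivity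
    have hn1 : (1:ℝ) ≤ (n : ℝ) := by exact_mod_cast hn
    nlinarith [hzR, mul_nonneg (mul_nonneg hDf0 (by linarith : (0:ℝ) ≤ (n:ℝ) - 1)) (sub_nonneg.mpr hCleR), mul_nonneg hDf0 (by nlinarith [hn1] : (0:ℝ) ≤ (n:ℝ)^2 - n + N), hNpos, hnpos, (by linarith : (0:ℝ) < (N:ℝ) + n - 1), hk0, hDf0]
  have e1 : (Cf.card : ℝ) / N * ((Df.card : ℝ) / n) - (Df.card : ℝ) / N
      = ((Cf.card : ℝ) * Df.card - n * Df.card) / (N * n) := by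
    field_simp
  have e2 : (k : ℝ) / n = ((N : ℝ) * k) / (N * n) := by
    rw [mul_div_mul_left _ _ hNpos.ne']
  rw [ge_iff_le, e1, e2]
  exact (div_le_div_iff_of_pos_right (by positivity)).mpr hkey
end

section
/- Let A, B ⊆ ℤ. For each n ∈ ℕ choose x_n, y_n achieving A_n = A ∩ [x_n+1, x_n+n²] and B_n = B ∩ [y_n+1, y_n+n] with lim |A_n|/n² = α and lim |B_n|/n = β. Then there exists a sequence (z_n) such that, setting E_n = (A_n − x_n − z_n) ∩ (B_n − y_n) ⊆ [1, n], one has liminf_{n→∞} |E_n|/n ≥ αβ. -/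
open Filter Set Pointwise

lemma key_shift (n : ℕ) (hn : 0 < n) (C D : Finset ℤ)
    (hC : C ⊆ Finset.Icc 1 ((n:ℤ)^2)) (hD : D ⊆ Finset.Icc 1 (n:ℤ)) :
    ∃ z : ℤ, (C.card : ℤ) * D.card - n * D.card ≤
      (n:ℤ)^2 * ((D.filter (fun d => d + z ∈ C)).card) := by
  classical
  set S : Finset ℤ := Finset.Icc 0 ((n:ℤ)^2 - 1) with hS
  have hScard : S.card = n^2 := by
    rw [hS, Int.card_Icc]
    have : ((n:ℤ)^2) = ((n^2 : ℕ) : ℤ) := by push_cast; ring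
    omega
  -- per-d lower bound
  have hd : ∀ d ∈ D, (C.card : ℤ) - n ≤ ((S.filter (fun z => d + z ∈ C)).card : ℤ) := by
    intro d hdD
    obtain ⟨hd1, hdn⟩ := Finset.mem_Icc.mp (hD hdD)
    have himg : (S.filter (fun z => d + z ∈ C)).card = (C.filter (fun c => d ≤ c)).card := by
      apply Finset.card_bij (fun z _ => d + z)
      · intro z hz
        obtain ⟨hzS, hzC⟩ := Finset.mem_filter.mp hz
        obtain ⟨hz0, hz1⟩ := Finset.mem_Icc.mp hzS
        exact Finset.mem_filter.mpr ⟨hzC, by omega⟩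
      · intro z1 h1 z2 h2 h; omega
      · intro c hc
        obtain ⟨hcC, hdc⟩ := Finset.mem_filter.mp hc
        obtain ⟨hc1, hc2⟩ := Finset.mem_Icc.mp (hC hcC)
        refine ⟨c - d, Finset.mem_filter.mpr ⟨Finset.mem_Icc.mpr ⟨by omega, by omega⟩, by
          simpa using hcC⟩, by omega⟩
    rw [himg]
    have hsplit := Finset.card_filter_add_card_filter_not
      (s := C) (p := fun c => d ≤ c)
    have hsub : (C.filter (fun c => ¬ d ≤ c)) ⊆ Finset.Icc 1 (d - 1) := by
      intro c hc
      obtain ⟨hcC, hdc⟩ := Finset.mem_filter.mp hc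
      obtain ⟨hc1, hc2⟩ := Finset.mem_Icc.mp (hC hcC)
      exact Finset.mem_Icc.mpr ⟨hc1, by omega⟩
    have hcard2 : (C.filter (fun c => ¬ d ≤ c)).card ≤ (d - 1).toNat := by
      simpa [Int.card_Icc] using Finset.card_le_card hsub
    have : ((d - 1).toNat : ℤ) ≤ n - 1 := by omega
    omega
  -- sum lower bound
  have swap : ∑ z ∈ S, (((D.filter (fun d => d + z ∈ C)).card : ℤ)) =
      ∑ d ∈ D, (((S.filter (fun z => d + z ∈ C)).card : ℤ)) := by
    simp_rw [Finset.card_filter]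
    push_cast
    rw [Finset.sum_comm]
  have hsum : (D.card : ℤ) * ((C.card : ℤ) - n) ≤
      ∑ z ∈ S, (((D.filter (fun d => d + z ∈ C)).card : ℤ)) := by
    rw [swap]
    calc (D.card : ℤ) * ((C.card : ℤ) - n) = ∑ _d ∈ D, ((C.card : ℤ) - n) := by
          rw [Finset.sum_const, nsmul_eq_mul]
      _ ≤ _ := Finset.sum_le_sum hd
  -- pigeonhole
  have hSne : S.Nonempty := by
    refine ⟨0, Finset.mem_Icc.mpr ⟨le_refl _, ?_⟩⟩
    have : (1:ℤ) ≤ (n:ℤ)^2 := by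
      have : (1:ℤ) ≤ (n:ℤ) := by exact_mod_cast hn
      nlinarith
    omega
  have hpig : ∃ z ∈ S, (D.card : ℤ) * ((C.card : ℤ) - n) ≤
      (n:ℤ)^2 * ((D.filter (fun d => d + z ∈ C)).card : ℤ) := by
    apply Finset.exists_le_of_sum_le hSne
    calc ∑ _z ∈ S, (D.card : ℤ) * ((C.card : ℤ) - n)
        = (n:ℤ)^2 * ((D.card : ℤ) * ((C.card : ℤ) - n)) := by
          rw [Finset.sum_const, nsmul_eq_mul, hScard]; push_cast; ring
      _ ≤ (n:ℤ)^2 * ∑ z ∈ S, (((D.filter (fun d => d + z ∈ C)).card : ℤ)) := by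
          apply mul_le_mul_of_nonneg_left hsum (by positivity)
      _ = ∑ z ∈ S, (n:ℤ)^2 * (((D.filter (fun d => d + z ∈ C)).card : ℤ)) := by
          rw [Finset.mul_sum]
  obtain ⟨z, _, hz⟩ := hpig
  exact ⟨z, by linarith [hz]⟩

theorem dense_intersection_of_shifts (A B : Set ℤ) (x y : ℕ → ℤ) (α β : ℝ)
    (hA : Filter.Tendsto
      (fun n : ℕ => ((A ∩ Set.Icc (x n + 1) (x n + (n : ℤ) ^ 2)).ncard : ℝ) / (n : ℝ) ^ 2)
      Filter.atTop (nhds α))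
    (hB : Filter.Tendsto
      (fun n : ℕ => ((B ∩ Set.Icc (y n + 1) (y n + (n : ℤ))).ncard : ℝ) / n)
      Filter.atTop (nhds β)) :
    ∃ z : ℕ → ℤ,
      α * β ≤ Filter.liminf
        (fun n : ℕ =>
          ((((fun a => a - x n - z n) '' (A ∩ Set.Icc (x n + 1) (x n + (n : ℤ) ^ 2))) ∩
            ((fun b => b - y n) '' (B ∩ Set.Icc (y n + 1) (y n + (n : ℤ))))).ncard : ℝ) / n)
        Filter.atTop := by
  classical
  set Cs : ℕ → Set ℤ := fun n => A ∩ Set.Icc (x n + 1) (x n + (n:ℤ)^2) with hCs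
  set Bs : ℕ → Set ℤ := fun n => B ∩ Set.Icc (y n + 1) (y n + (n:ℤ)) with hBs
  have hCf : ∀ n, (Cs n).Finite := fun n => (Set.finite_Icc _ _).inter_of_right A
  have hBf : ∀ n, (Bs n).Finite := fun n => (Set.finite_Icc _ _).inter_of_right B
  set Cfin : ℕ → Finset ℤ := fun n => ((hCf n).toFinset).image (fun a => a - x n) with hCfin
  set Dfin : ℕ → Finset ℤ := fun n => ((hBf n).toFinset).image (fun b => b - y n) with hDfin
  have hinj : ∀ t : ℤ, Function.Injective (fun a : ℤ => a - t) := by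
    intro t a b h; simpa using h
  have hCcard : ∀ n, (Cfin n).card = (Cs n).ncard := by
    intro n
    rw [hCfin, Finset.card_image_of_injective _ (hinj _), Set.ncard_eq_toFinset_card _ (hCf n)]
  have hDcard : ∀ n, (Dfin n).card = (Bs n).ncard := by
    intro n
    rw [hDfin, Finset.card_image_of_injective _ (hinj _), Set.ncard_eq_toFinset_card _ (hBf n)]
  have hCsub : ∀ n, Cfin n ⊆ Finset.Icc 1 ((n:ℤ)^2) := by
    intro n a ha
    obtain ⟨c, hc, rfl⟩ := Finset.mem_image.mp ha
    obtain ⟨-, hc2⟩ := (Set.Finite.mem_toFinset _).mp hc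
    obtain ⟨h1, h2⟩ := Set.mem_Icc.mp hc2
    exact Finset.mem_Icc.mpr ⟨by omega, by omega⟩
  have hDsub : ∀ n, Dfin n ⊆ Finset.Icc 1 ((n:ℤ)) := by
    intro n a ha
    obtain ⟨c, hc, rfl⟩ := Finset.mem_image.mp ha
    obtain ⟨-, hc2⟩ := (Set.Finite.mem_toFinset _).mp hc
    obtain ⟨h1, h2⟩ := Set.mem_Icc.mp hc2
    exact Finset.mem_Icc.mpr ⟨by omega, by omega⟩
  have hex : ∀ n : ℕ, ∃ z : ℤ, 0 < n →
      ((Cfin n).card : ℤ) * (Dfin n).card - n * (Dfin n).card ≤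
        (n:ℤ)^2 * (((Dfin n).filter (fun d => d + z ∈ Cfin n)).card) := by
    intro n
    rcases Nat.eq_zero_or_pos n with h | h
    · exact ⟨0, by omega⟩
    · obtain ⟨z, hz⟩ := key_shift n h (Cfin n) (Dfin n) (hCsub n) (hDsub n)
      exact ⟨z, fun _ => hz⟩
  choose z hz using hex
  refine ⟨z, ?_⟩
  have hE : ∀ n, (((fun a => a - x n - z n) '' Cs n) ∩ ((fun b => b - y n) '' Bs n)).ncard
      = ((Dfin n).filter (fun d => d + z n ∈ Cfin n)).card := by
    intro n
    rw [← Set.ncard_coe_finset]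
    congr 1
    ext e
    simp only [Set.mem_inter_iff, Set.mem_image, Finset.coe_filter, Set.mem_setOf_eq,
      Finset.mem_coe, hCfin, hDfin, Finset.mem_image, Set.Finite.mem_toFinset]
    constructor
    · rintro ⟨⟨a, ha, rfl⟩, ⟨b, hb, hbe⟩⟩
      exact ⟨⟨b, hb, hbe⟩, ⟨a, ha, by omega⟩⟩
    · rintro ⟨⟨b, hb, hbe⟩, ⟨a, ha, hae⟩⟩
      exact ⟨⟨a, ha, by omega⟩, ⟨b, hb, hbe⟩⟩
  set g : ℕ → ℝ := fun n =>
      ((((fun a => a - x n - z n) '' Cs n) ∩ ((fun b => b - y n) '' Bs n)).ncard : ℝ) / n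
    with hg
  set f : ℕ → ℝ := fun n => ((Cs n).ncard : ℝ)/(n:ℝ)^2 * (((Bs n).ncard : ℝ)/n) with hf
  have hftend : Tendsto f atTop (nhds (α*β)) := hA.mul hB
  have hf' : Tendsto (fun n => f n - 1/(n:ℝ)) atTop (nhds (α*β)) := by
    have := hftend.sub tendsto_one_div_atTop_nhds_zero_nat
    simpa using this
  have hev : ∀ᶠ n in atTop, f n - 1/(n:ℝ) ≤ g n := by
    rw [eventually_atTop]
    refine ⟨1, fun n hn1 => ?_⟩
    have hn : 0 < n := hn1
    have hnR : (1:ℝ) ≤ (n:ℝ) := by exact_mod_cast hn1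
    have hnn : (0:ℝ) < (n:ℝ) := by linarith
    have h1 := hz n hn
    rw [hCcard, hDcard] at h1
    have hzR : ((Cs n).ncard : ℝ) * ((Bs n).ncard : ℝ) - (n:ℝ) * ((Bs n).ncard : ℝ) ≤
        (n:ℝ)^2 * ((((Dfin n).filter (fun dd => dd + z n ∈ Cfin n)).card : ℝ)) := by
      have h2 : (((((Cs n).ncard : ℤ)) * ((Bs n).ncard : ℤ) - (n:ℤ) * ((Bs n).ncard : ℤ) : ℤ) : ℝ) ≤
          ((((n:ℤ)^2 * ((((Dfin n).filter (fun dd => dd + z n ∈ Cfin n)).card : ℤ)) : ℤ)) : ℝ) := by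
        exact_mod_cast h1
      push_cast at h2
      convert h2 using 2
    have hdle : ((Bs n).ncard : ℝ) ≤ (n:ℝ) := by
      have h3 := Finset.card_le_card (hDsub n)
      rw [hDcard] at h3
      have h2 : (Finset.Icc (1:ℤ) (n:ℤ)).card = n := by
        rw [Int.card_Icc]; omega
      rw [h2] at h3
      exact_mod_cast h3
    have hd0 : (0:ℝ) ≤ ((Bs n).ncard : ℝ) := by positivity
    have hgn : g n = ((((Dfin n).filter (fun dd => dd + z n ∈ Cfin n)).card : ℝ)) / (n:ℝ) := by
      rw [hg]
      simp only
      rw [hE n]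
    rw [hgn, hf]
    simp only
    set c : ℝ := ((Cs n).ncard : ℝ)
    set d : ℝ := ((Bs n).ncard : ℝ)
    set k : ℝ := ((((Dfin n).filter (fun dd => dd + z n ∈ Cfin n)).card : ℝ))
    have e1 : c/(n:ℝ)^2*(d/(n:ℝ)) - 1/(n:ℝ) = (c*d - (n:ℝ)^2)/(n:ℝ)^3 := by
      field_simp
    have e2 : k/(n:ℝ) = ((n:ℝ)^2*k)/(n:ℝ)^3 := by
      field_simp
    rw [e1, e2]
    gcongr
    nlinarith
  have hEle : ∀ n, g n ≤ 1 := by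
    intro n
    rcases Nat.eq_zero_or_pos n with h | h
    · rw [hg]; subst h; simp
    · have hnn : (0:ℝ) < (n:ℝ) := by exact_mod_cast h
      have hk : (((fun a => a - x n - z n) '' Cs n) ∩ ((fun b => b - y n) '' Bs n)).ncard ≤ n := by
        rw [hE n]
        calc ((Dfin n).filter (fun d => d + z n ∈ Cfin n)).card ≤ (Dfin n).card :=
              Finset.card_le_card (Finset.filter_subset _ _)
          _ ≤ (Finset.Icc (1:ℤ) (n:ℤ)).card := Finset.card_le_card (hDsub n)
          _ = n := by rw [Int.card_Icc]; omega
      rw [hg]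
      simp only
      rw [div_le_one hnn]
      exact_mod_cast hk
  have hbd : IsBoundedUnder (· ≥ ·) atTop (fun n => f n - 1/(n:ℝ)) :=
    hf'.isBoundedUnder_ge
  have hcb : IsCoboundedUnder (· ≥ ·) atTop g :=
    isCoboundedUnder_ge_of_le atTop hEle
  calc α * β = Filter.liminf (fun n => f n - 1/(n:ℝ)) atTop := (hf'.liminf_eq).symm
    _ ≤ Filter.liminf g atTop := liminf_le_liminf hev hbd hcb
end

section
/- For each n ∈ ℕ let E_n ⊆ [1, n] be a set of integers, and suppose lim_{n→∞} |E_n|/n = γ > 0. Then there exists a finite set F ⊆ ℤ with |F| ≤ 1/γ such that for every m ∈ ℕ, the set {n ∈ ℕ : [1, m] ⊆ (E_n − E_n) + F} has positive upper Banach density. -/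
open Filter Set Pointwise

/-- max count for sets of naturals. -/
noncomputable def maxCountN (S : Set ℕ) (n : ℕ) : ℕ :=
  sSup {c : ℕ | ∃ x : ℕ, c = (S ∩ Set.Icc (x + 1) (x + n)).ncard}

/-- Upper Banach density for sets of naturals. -/
noncomputable def BDN (S : Set ℕ) : ℝ :=
  ⨅ n : ℕ+, (maxCountN S (n : ℕ) : ℝ) / (n : ℕ)

set_option maxHeartbeats 1000000

namespace L2


lemma window_card (S : Set ℕ) (x n : ℕ) : (S ∩ Set.Icc (x + 1) (x + n)).ncard ≤ n := by
  have h := Set.ncard_le_ncard (inter_subset_right (s := S)) (Set.finite_Icc (x+1) (x+n))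
  have : (Set.Icc (x+1) (x+n)).ncard = n := by
    simp [Set.ncard_eq_toFinset_card', Set.toFinset_Icc]
  omega

lemma bddAbove_aux (S : Set ℕ) (n : ℕ) :
    BddAbove {c : ℕ | ∃ x : ℕ, c = (S ∩ Set.Icc (x + 1) (x + n)).ncard} :=
  ⟨n, by rintro c ⟨x, rfl⟩; exact window_card S x n⟩

lemma mcN_le (S : Set ℕ) (n : ℕ) : maxCountN S n ≤ n :=
  csSup_le ⟨_, 0, rfl⟩ (by rintro c ⟨x, rfl⟩; exact window_card S x n)

lemma le_mcN (S : Set ℕ) (n x : ℕ) : (S ∩ Set.Icc (x + 1) (x + n)).ncard ≤ maxCountN S n :=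
  le_csSup (bddAbove_aux S n) ⟨x, rfl⟩

lemma mcN_mono {S T : Set ℕ} (h : S ⊆ T) (n : ℕ) : maxCountN S n ≤ maxCountN T n := by
  refine csSup_le ⟨_, 0, rfl⟩ ?_
  rintro c ⟨x, rfl⟩
  calc (S ∩ Set.Icc (x+1) (x+n)).ncard ≤ (T ∩ Set.Icc (x+1) (x+n)).ncard :=
        Set.ncard_le_ncard (inter_subset_inter_left _ h)
          ((Set.finite_Icc _ _).subset inter_subset_right)
    _ ≤ maxCountN T n := le_mcN T n x

lemma mcN_union_le (A B : Set ℕ) (n : ℕ) :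
    maxCountN (A ∪ B) n ≤ maxCountN A n + maxCountN B n := by
  refine csSup_le ⟨_, 0, rfl⟩ ?_
  rintro c ⟨x, rfl⟩
  have hsub : (A ∪ B) ∩ Set.Icc (x+1) (x+n) ⊆
      (A ∩ Set.Icc (x+1) (x+n)) ∪ (B ∩ Set.Icc (x+1) (x+n)) := by
    rw [Set.union_inter_distrib_right]
  calc ((A ∪ B) ∩ Set.Icc (x+1) (x+n)).ncard
      ≤ ((A ∩ Set.Icc (x+1) (x+n)) ∪ (B ∩ Set.Icc (x+1) (x+n))).ncard :=
        Set.ncard_le_ncard hsub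
          (((Set.finite_Icc _ _).subset inter_subset_right).union
            ((Set.finite_Icc _ _).subset inter_subset_right))
    _ ≤ (A ∩ Set.Icc (x+1) (x+n)).ncard + (B ∩ Set.Icc (x+1) (x+n)).ncard :=
        Set.ncard_union_le _ _
    _ ≤ maxCountN A n + maxCountN B n := add_le_add (le_mcN A n x) (le_mcN B n x)

lemma mcN_subadd (S : Set ℕ) (a b : ℕ) :
    maxCountN S (a + b) ≤ maxCountN S a + maxCountN S b := by
  refine csSup_le ⟨_, 0, rfl⟩ ?_
  rintro c ⟨x, rfl⟩
  have hsub : S ∩ Set.Icc (x+1) (x+(a+b)) ⊆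
      (S ∩ Set.Icc (x+1) (x+a)) ∪ (S ∩ Set.Icc ((x+a)+1) ((x+a)+b)) := by
    rintro y ⟨hy, h1, h2⟩
    rcases le_or_gt y (x+a) with h | h
    · exact Or.inl ⟨hy, h1, h⟩
    · exact Or.inr ⟨hy, h, by omega⟩
  calc (S ∩ Set.Icc (x+1) (x+(a+b))).ncard
      ≤ ((S ∩ Set.Icc (x+1) (x+a)) ∪ (S ∩ Set.Icc ((x+a)+1) ((x+a)+b))).ncard :=
        Set.ncard_le_ncard hsub
          (((Set.finite_Icc _ _).subset inter_subset_right).union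
            ((Set.finite_Icc _ _).subset inter_subset_right))
    _ ≤ _ := Set.ncard_union_le _ _
    _ ≤ maxCountN S a + maxCountN S b := add_le_add (le_mcN S a x) (le_mcN S b (x+a))

lemma mcN_biUnion_le {ι : Type*} (s : Finset ι) (T : ι → Set ℕ) (n : ℕ) :
    maxCountN (⋃ x ∈ s, T x) n ≤ ∑ x ∈ s, maxCountN (T x) n := by
  classical
  induction s using Finset.induction_on with
  | empty => simp [maxCountN]
    -- maxCountN ∅ n = 0 ?
  | insert _ _ hx ih =>
    rename_i a s
    calc maxCountN (⋃ x ∈ insert a s, T x) n = maxCountN (T a ∪ ⋃ x ∈ s, T x) n := by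
          rw [Finset.set_biUnion_insert]
      _ ≤ maxCountN (T a) n + maxCountN (⋃ x ∈ s, T x) n := mcN_union_le _ _ _
      _ ≤ maxCountN (T a) n + ∑ x ∈ s, maxCountN (T x) n := by omega
      _ = ∑ x ∈ insert a s, maxCountN (T x) n := by rw [Finset.sum_insert hx]

lemma mcN_le_ncard (S : Set ℕ) (hS : S.Finite) (n : ℕ) : maxCountN S n ≤ S.ncard := by
  refine csSup_le ⟨_, 0, rfl⟩ ?_
  rintro c ⟨x, rfl⟩
  exact Set.ncard_le_ncard inter_subset_left hS

lemma one_le_mcN {S : Set ℕ} {s : ℕ} (hs : s ∈ S) (h1 : 1 ≤ s) {n : ℕ} (hn : 1 ≤ n) :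
    1 ≤ maxCountN S n := by
  have hmem : s ∈ S ∩ Set.Icc ((s-1) + 1) ((s-1) + n) := ⟨hs, by omega, by omega⟩
  have : 1 ≤ (S ∩ Set.Icc ((s-1) + 1) ((s-1) + n)).ncard := by
    rw [Nat.one_le_iff_ne_zero]
    intro h
    have := Set.ncard_eq_zero ((Set.finite_Icc _ _).subset inter_subset_right) |>.mp h
    rw [this] at hmem; exact hmem
  exact le_trans this (le_mcN S n (s-1))

lemma exists_mem_of_mcN_pos {S : Set ℕ} {n : ℕ} (h : 0 < maxCountN S n) :
    ∃ s ∈ S, 1 ≤ s := by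
  have hne : {c : ℕ | ∃ x : ℕ, c = (S ∩ Set.Icc (x + 1) (x + n)).ncard}.Nonempty := ⟨_, 0, rfl⟩
  have hmem := Nat.sSup_mem hne (bddAbove_aux S n)
  obtain ⟨x, hx⟩ := hmem
  rw [maxCountN] at h
  rw [hx] at h
  obtain ⟨s, hs, h1, -⟩ := Set.nonempty_of_ncard_ne_zero h.ne'
  exact ⟨s, hs, by omega⟩



lemma bddBelow_BDN (S : Set ℕ) : BddBelow (Set.range fun n : ℕ+ => (maxCountN S (n:ℕ) : ℝ) / (n:ℕ)) := by
  refine ⟨0, ?_⟩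
  rintro r ⟨n, rfl⟩
  positivity

lemma BDN_nonneg (S : Set ℕ) : 0 ≤ BDN S :=
  le_ciInf fun n => by positivity

lemma BDN_le (S : Set ℕ) (n : ℕ+) : BDN S ≤ (maxCountN S (n:ℕ) : ℝ) / (n:ℕ) :=
  ciInf_le (bddBelow_BDN S) n

lemma le_BDN {S : Set ℕ} {δ : ℝ} (h : ∀ n : ℕ+, δ ≤ (maxCountN S (n:ℕ) : ℝ) / (n:ℕ)) :
    δ ≤ BDN S := le_ciInf h

lemma BDN_mono {S T : Set ℕ} (h : S ⊆ T) : BDN S ≤ BDN T := by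
  refine le_BDN fun n => le_trans (BDN_le S n) ?_
  have := mcN_mono h (n:ℕ)
  have h2 : (maxCountN S (n:ℕ) : ℝ) ≤ (maxCountN T (n:ℕ) : ℝ) := by exact_mod_cast this
  gcongr

lemma BDN_univ : BDN (Set.univ : Set ℕ) = 1 := by
  have h : ∀ n : ℕ+, (maxCountN Set.univ (n:ℕ) : ℝ) / (n:ℕ) = 1 := by
    intro n
    have h1 : maxCountN (Set.univ : Set ℕ) (n:ℕ) = (n:ℕ) := by
      refine le_antisymm (mcN_le _ _) ?_
      have : ((Set.univ : Set ℕ) ∩ Set.Icc (0+1) (0+(n:ℕ))).ncard = (n:ℕ) := by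
        simp [Set.ncard_eq_toFinset_card', Set.toFinset_Icc]
      refine le_csSup ⟨(n:ℕ), ?_⟩ ⟨0, this.symm⟩
      rintro c ⟨x, rfl⟩
      calc (Set.univ ∩ Set.Icc (x+1) (x+(n:ℕ))).ncard
          ≤ (Set.Icc (x+1) (x+(n:ℕ))).ncard := Set.ncard_le_ncard inter_subset_right (Set.finite_Icc _ _)
        _ = (n:ℕ) := by simp [Set.ncard_eq_toFinset_card', Set.toFinset_Icc]
    rw [h1, div_self]
    exact_mod_cast n.pos.ne'
  unfold BDN
  simp only [h]
  exact ciInf_const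

lemma eventually_small {S : Set ℕ} (h0 : BDN S ≤ 0) {ε : ℝ} (hε : 0 < ε) :
    ∀ᶠ n in atTop, (maxCountN S n : ℝ) / n < ε := by
  have hsub : Subadditive fun n => (maxCountN S n : ℝ) := by
    intro a b
    simp only
    exact_mod_cast mcN_subadd S a b
  have hlt : BDN S < ε := lt_of_le_of_lt h0 hε
  obtain ⟨n, hn⟩ := exists_lt_of_ciInf_lt hlt
  exact hsub.eventually_div_lt_of_div_lt (n := (n:ℕ)) n.pos.ne' (by exact_mod_cast hn)



def SS (E : ℕ → Set ℤ) (F : Finset ℤ) : Set ℕ :=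
  {n : ℕ | ∀ f ∈ F, ∀ g ∈ F, f ≠ g → f - g ∉ E n - E n}

lemma count_bound (E : ℕ → Set ℤ) (hE : ∀ n, E n ⊆ Set.Icc 1 (n:ℤ)) (F : Finset ℤ)
    (hF : F.Nonempty) {n : ℕ} (hn : n ∈ SS E F) :
    F.card * (E n).ncard ≤ n + ((F.max' hF) - (F.min' hF)).toNat := by
  classical
  have hfin : (E n).Finite := (Set.finite_Icc _ _).subset (hE n)
  set En := hfin.toFinset with hEn
  have hmaps : ∀ p ∈ F ×ˢ En, (fun p : ℤ × ℤ => p.1 + p.2) p ∈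
      Finset.Icc (F.min' hF + 1) (F.max' hF + n) := by
    rintro ⟨f, a⟩ hp
    rw [Finset.mem_product] at hp
    have ha : a ∈ E n := (Set.Finite.mem_toFinset hfin).mp hp.2
    have h1 := (hE n) ha
    rw [Set.mem_Icc] at h1
    have h2 := F.min'_le f hp.1
    have h3 := F.le_max' f hp.1
    simp only [Finset.mem_Icc]
    constructor <;> omega
  have hinj : Set.InjOn (fun p : ℤ × ℤ => p.1 + p.2) (F ×ˢ En : Finset (ℤ × ℤ)) := by
    rintro ⟨f, a⟩ hp ⟨g, b⟩ hq (heq : f + a = g + b)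
    simp only [Finset.coe_product, Set.mem_prod, Finset.mem_coe] at hp hq
    have ha : a ∈ E n := (Set.Finite.mem_toFinset hfin).mp hp.2
    have hb : b ∈ E n := (Set.Finite.mem_toFinset hfin).mp hq.2
    by_cases hfg : f = g
    · subst hfg
      have : a = b := by omega
      simp [this]
    · exfalso
      exact hn f hp.1 g hq.1 hfg (by
        have : b - a = f - g := by omega
        exact this ▸ Set.sub_mem_sub hb ha)
  have hcard := Finset.card_le_card_of_injOn _ hmaps hinj
  rw [Finset.card_product] at hcard
  have hIcc : (Finset.Icc (F.min' hF + 1) (F.max' hF + n)).card =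
      n + ((F.max' hF) - (F.min' hF)).toNat := by
    rw [Int.card_Icc]
    have hminmax : F.min' hF ≤ F.max' hF := F.min'_le _ (F.max'_mem hF)
    omega
  have hEncard : (E n).ncard = En.card := Set.ncard_eq_toFinset_card _ hfin
  rw [hIcc, ← hEncard] at hcard
  omega

lemma SS_infinite (E : ℕ → Set ℤ) (F : Finset ℤ) (hpos : 0 < BDN (SS E F)) :
    (SS E F).Infinite := by
  by_contra hfin
  rw [Set.not_infinite] at hfin
  set C := (SS E F).ncard with hC
  obtain ⟨k, hk⟩ := exists_nat_gt ((C : ℝ) / BDN (SS E F))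
  set np : ℕ+ := ⟨k + 1, Nat.succ_pos k⟩ with hnp
  have h1 := BDN_le (SS E F) np
  have h2 : (maxCountN (SS E F) (np : ℕ) : ℝ) ≤ C := by
    exact_mod_cast mcN_le_ncard _ hfin _
  have hnpk : ((np : ℕ) : ℝ) = (k : ℝ) + 1 := by simp [hnp]
  have hle : BDN (SS E F) ≤ (C : ℝ) / ((k:ℝ)+1) := by
    refine le_trans h1 ?_
    rw [hnpk]
    gcongr
  rw [div_lt_iff₀ hpos] at hk
  have : (C:ℝ)/((k:ℝ)+1) < BDN (SS E F) := by
    rw [div_lt_iff₀ (by positivity)]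
    nlinarith
  linarith

lemma card_gamma_le (E : ℕ → Set ℤ) (hE : ∀ n, E n ⊆ Set.Icc 1 (n:ℤ)) (γ : ℝ)
    (hlim : Tendsto (fun n : ℕ => ((E n).ncard : ℝ) / n) atTop (nhds γ))
    (F : Finset ℤ) (hpos : 0 < BDN (SS E F)) :
    (F.card : ℝ) * γ ≤ 1 := by
  rcases F.eq_empty_or_nonempty with rfl | hF
  · simp
  by_contra h1
  push_neg at h1
  set D : ℕ := ((F.max' hF) - (F.min' hF)).toNat
  set t : ℝ := (1 + (F.card : ℝ) * γ) / 2 with ht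
  have hinf := SS_infinite E F hpos
  have hfreq : ∃ᶠ n in atTop, n ∈ SS E F := by
    rw [Filter.frequently_atTop]
    intro N
    obtain ⟨b, hb, hb2⟩ := hinf.exists_gt N
    exact ⟨b, hb2.le, hb⟩
  have hu : Tendsto (fun n : ℕ => (F.card : ℝ) * (((E n).ncard : ℝ) / n)) atTop
      (nhds ((F.card : ℝ) * γ)) := hlim.const_mul _
  have hv : Tendsto (fun n : ℕ => ((n : ℝ) + D) / n) atTop (nhds 1) := by
    have h0 : Tendsto (fun n : ℕ => (D : ℝ) / n) atTop (nhds 0) :=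
      tendsto_const_nhds.div_atTop tendsto_natCast_atTop_atTop
    have := (tendsto_const_nhds (x := (1:ℝ)) (f := atTop (α := ℕ))).add h0
    rw [add_zero] at this
    refine this.congr' ?_
    filter_upwards [eventually_gt_atTop 0] with n hn
    field_simp
  have hev : ∀ᶠ n : ℕ in atTop, ((n : ℝ) + D) / n < t ∧ t < (F.card : ℝ) * (((E n).ncard : ℝ) / n) := by
    have e1 := hv.eventually_lt_const (show (1:ℝ) < t by rw [ht]; linarith)
    have e2 := hu.eventually_const_lt (show t < (F.card : ℝ) * γ by rw [ht]; linarith)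
    filter_upwards [e1, e2] with n h1 h2 using ⟨h1, h2⟩
  have hcontra := (hfreq.and_eventually (hev.and (eventually_gt_atTop 0))).exists
  obtain ⟨n, hnSS, ⟨hlt1, hlt2⟩, hn0⟩ := hcontra
  have hb := count_bound E hE F hF hnSS
  have hb' : (F.card : ℝ) * (((E n).ncard : ℝ) / n) ≤ ((n : ℝ) + D) / n := by
    rw [mul_div_assoc'] 
    gcongr
    exact_mod_cast hb
  linarith


end L2

open L2 in
theorem lemma_two (E : ℕ → Set ℤ) (hE : ∀ n : ℕ, E n ⊆ Set.Icc 1 (n : ℤ)) (γ : ℝ)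
    (hγ : 0 < γ)
    (hlim : Filter.Tendsto (fun n : ℕ => ((E n).ncard : ℝ) / n) Filter.atTop (nhds γ)) :
    ∃ F : Finset ℤ, (F.card : ℝ) ≤ 1 / γ ∧
      ∀ m : ℕ, 0 < BDN {n : ℕ | Set.Icc 1 (m : ℤ) ⊆ (E n - E n) + (F : Set ℤ)} := by
  classical
  -- eventually E n is nonempty
  have hNE : ∀ᶠ n : ℕ in atTop, (E n).Nonempty := by
    filter_upwards [hlim.eventually_const_lt (show γ/2 < γ by linarith)] with n hn
    rcases Set.eq_empty_or_nonempty (E n) with h | h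
    · rw [h] at hn; simp at hn; linarith
    · exact h
  obtain ⟨N0, hN0⟩ := eventually_atTop.mp hNE
  -- maximal F
  set Ks : Set ℕ := {k : ℕ | ∃ F : Finset ℤ, F.card = k ∧ 0 < BDN (SS E F)} with hKs
  have h1K : 1 ∈ Ks := by
    refine ⟨{0}, by simp, ?_⟩
    have : SS E ({0} : Finset ℤ) = Set.univ := by
      ext n
      simp only [SS, Set.mem_setOf_eq, Finset.mem_singleton, Set.mem_univ, iff_true]
      rintro f rfl g rfl h
      exact absurd rfl h
    rw [this, BDN_univ]
    norm_num
  have hbdd : BddAbove Ks := by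
    refine ⟨Nat.ceil (1/γ), ?_⟩
    rintro k ⟨F, rfl, hpos⟩
    have h := card_gamma_le E hE γ hlim F hpos
    have h2 : (F.card : ℝ) ≤ 1/γ := (le_div_iff₀ hγ).mpr h
    have h3 : (F.card : ℝ) ≤ (Nat.ceil (1/γ) : ℝ) := le_trans h2 (Nat.le_ceil _)
    exact_mod_cast h3
  obtain ⟨F, hFcard, hFpos⟩ := Nat.sSup_mem ⟨1, h1K⟩ hbdd
  have hF1γ : (F.card : ℝ) ≤ 1 / γ :=
    (le_div_iff₀ hγ).mpr (card_gamma_le E hE γ hlim F hFpos)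
  refine ⟨F, hF1γ, ?_⟩
  intro m
  -- maximality of F
  have hmax : ∀ x : ℤ, x ∉ F → BDN (SS E (insert x F)) ≤ 0 := by
    intro x hx
    by_contra h
    push_neg at h
    have hmem : F.card + 1 ∈ Ks :=
      ⟨insert x F, by rw [Finset.card_insert_of_notMem hx], h⟩
    have := le_csSup hbdd hmem
    omega
  set c := BDN (SS E F) with hc
  set bads : Finset ℤ := Finset.Icc 1 (m:ℤ) \ F with hbads
  set k : ℕ := bads.card + 1 with hk
  set ε : ℝ := c / (2*k) with hε
  have hεpos : 0 < ε := by
    have : (0:ℝ) < k := by positivity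
    positivity
  have hall : ∀ᶠ n : ℕ in atTop,
      ∀ x ∈ bads, (maxCountN (SS E (insert x F)) n : ℝ)/n < ε := by
    rw [Filter.eventually_all_finset]
    intro x hx
    exact eventually_small (hmax x (Finset.mem_sdiff.mp hx).2) hεpos
  have hN0small : ∀ᶠ n : ℕ in atTop, (N0:ℝ)/n < ε := by
    have h0 : Tendsto (fun n : ℕ => (N0 : ℝ) / n) atTop (nhds 0) :=
      tendsto_const_nhds.div_atTop tendsto_natCast_atTop_atTop
    exact h0.eventually_lt_const hεpos
  obtain ⟨N1, hN1⟩ := eventually_atTop.mp (hall.and hN0small)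
  set N : ℕ := max N1 1 with hNdef
  have hN1le : 1 ≤ N := le_max_right _ _
  set Bad : Set ℕ := Set.Iio N0 ∪ ⋃ x ∈ bads, SS E (insert x F) with hBad
  set core : Set ℕ := SS E F \ Bad with hcore
  -- the counting estimate for n ≥ N
  have hcount : ∀ n : ℕ, N ≤ n → c/2 ≤ (maxCountN core n : ℝ)/n := by
    intro n hn
    have hn1 : 1 ≤ n := le_trans hN1le hn
    have hnpos : (0:ℝ) < n := by exact_mod_cast hn1
    obtain ⟨hsmall, hN0s⟩ := hN1 n (le_trans (le_max_left _ _) hn)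
    have hsplit : maxCountN (SS E F) n ≤ maxCountN core n +
        (maxCountN (Set.Iio N0) n + ∑ x ∈ bads, maxCountN (SS E (insert x F)) n) := by
      have hsub : SS E F ⊆ core ∪ Bad := by
        intro a ha
        by_cases hb : a ∈ Bad
        · exact Or.inr hb
        · exact Or.inl ⟨ha, hb⟩
      calc maxCountN (SS E F) n ≤ maxCountN (core ∪ Bad) n := mcN_mono hsub n
        _ ≤ maxCountN core n + maxCountN Bad n := mcN_union_le _ _ _
        _ = maxCountN core n + maxCountN (Set.Iio N0 ∪ ⋃ x ∈ bads, SS E (insert x F)) n := by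
              rw [hBad]
        _ ≤ maxCountN core n + (maxCountN (Set.Iio N0) n +
            maxCountN (⋃ x ∈ bads, SS E (insert x F)) n) := by
              have := mcN_union_le (Set.Iio N0) (⋃ x ∈ bads, SS E (insert x F)) n
              omega
        _ ≤ _ := by
              have := mcN_biUnion_le bads (fun x => SS E (insert x F)) n
              omega
    have hIio : (maxCountN (Set.Iio N0) n : ℝ) ≤ N0 := by
      have h1 : maxCountN (Set.Iio N0) n ≤ (Set.Iio N0).ncard :=
        mcN_le_ncard _ (Set.finite_Iio _) n
      have h2 : (Set.Iio N0).ncard = N0 := by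
        simp [Set.ncard_eq_toFinset_card', Set.toFinset_Iio]
      rw [h2] at h1
      exact_mod_cast h1
    have hsum : ((∑ x ∈ bads, maxCountN (SS E (insert x F)) n : ℕ) : ℝ) ≤ bads.card * (ε * n) := by
      push_cast
      calc ∑ x ∈ bads, ((maxCountN (SS E (insert x F)) n : ℝ))
          ≤ ∑ _x ∈ bads, (ε * n) :=
            Finset.sum_le_sum (fun x hx => le_of_lt ((div_lt_iff₀ hnpos).mp (hsmall x hx)))
        _ = bads.card * (ε * n) := by rw [Finset.sum_const, nsmul_eq_mul]
    have hcn : c * n ≤ (maxCountN (SS E F) n : ℝ) := by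
      have hle : c ≤ (maxCountN (SS E F) n : ℝ) / n := BDN_le (SS E F) ⟨n, hn1⟩
      exact (le_div_iff₀ hnpos).mp hle
    have hsplitR : (maxCountN (SS E F) n : ℝ) ≤ (maxCountN core n : ℝ) +
        ((maxCountN (Set.Iio N0) n : ℝ) + ((∑ x ∈ bads, maxCountN (SS E (insert x F)) n : ℕ) : ℝ)) := by
      exact_mod_cast hsplit
    have hN0lt : (N0:ℝ) < ε * n := (div_lt_iff₀ hnpos).mp hN0s
    have hcombo : ((∑ x ∈ bads, maxCountN (SS E (insert x F)) n : ℕ) : ℝ) + (N0:ℝ)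
        < (k:ℝ) * (ε * n) := by
      have hkR : ((bads.card : ℝ) + 1) = (k:ℝ) := by rw [hk]; push_cast; ring
      have : (bads.card : ℝ) * (ε * n) + ε * n = (k:ℝ) * (ε * n) := by rw [← hkR]; ring
      linarith [hsum]
    have hprod : (k:ℝ) * (ε * n) = c/2 * n := by
      rw [hε]
      have hkne : (k:ℝ) ≠ 0 := by positivity
      field_simp
    rw [le_div_iff₀ hnpos]
    linarith
  -- core has an element ≥ 1
  have hcoreN : ∃ s ∈ core, 1 ≤ s := by
    have h := hcount N le_rfl
    have hNpos : (0:ℝ) < N := by exact_mod_cast hN1le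
    have hpos : 0 < maxCountN core N := by
      by_contra h0
      push_neg at h0
      have h00 : maxCountN core N = 0 := by omega
      rw [h00] at h
      simp only [Nat.cast_zero, zero_div] at h
      nlinarith [hFpos]
    exact exists_mem_of_mcN_pos hpos
  obtain ⟨s, hs, hs1⟩ := hcoreN
  -- core is contained in the good set
  have hsubG : core ⊆ {n : ℕ | Set.Icc 1 (m:ℤ) ⊆ (E n - E n) + (F : Set ℤ)} := by
    rintro n ⟨hnSS, hnBad⟩
    have hnIio : ¬ (n ∈ Set.Iio N0) := fun h => hnBad (Or.inl h)
    have hnb : ∀ x ∈ bads, n ∉ SS E (insert x F) :=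
      fun x hx hmem => hnBad (Or.inr (Set.mem_biUnion hx hmem))
    intro z hz
    rw [Set.mem_Icc] at hz
    by_cases hzF : z ∈ F
    · obtain ⟨a, ha⟩ := hN0 n (not_lt.mp (by simpa using hnIio))
      exact Set.mem_add.mpr ⟨a - a, Set.sub_mem_sub ha ha, z, hzF, by ring⟩
    · have hzb : z ∈ bads := Finset.mem_sdiff.mpr ⟨Finset.mem_Icc.mpr ⟨hz.1, hz.2⟩, hzF⟩
      have hnot := hnb z hzb
      simp only [SS, Set.mem_setOf_eq] at hnot
      push_neg at hnot
      obtain ⟨f, hf, g, hg, hfg, hmem⟩ := hnot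
      rcases Finset.mem_insert.mp hf with hfz | hfF
      · rcases Finset.mem_insert.mp hg with hgz | hgF
        · exact absurd (hfz.trans hgz.symm) hfg
        · rw [hfz] at hmem
          exact Set.mem_add.mpr ⟨z - g, hmem, g, hgF, by ring⟩
      · rcases Finset.mem_insert.mp hg with hgz | hgF
        · rw [hgz] at hmem
          obtain ⟨a, ha, b, hb, hab⟩ := Set.mem_sub.mp hmem
          have h2 : b - a ∈ E n - E n := Set.sub_mem_sub hb ha
          have h3 : b - a = z - f := by linarith
          rw [h3] at h2
          exact Set.mem_add.mpr ⟨z - f, h2, f, hfF, by ring⟩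
        · exact absurd hmem (hnSS f hfF g hgF hfg)
  -- conclude
  have hδ : 0 < min (c/2) (1/(N:ℝ)) := by
    have hNpos : (0:ℝ) < N := by exact_mod_cast hN1le
    have := hFpos
    positivity
  refine lt_of_lt_of_le hδ (le_trans (le_BDN ?_) (BDN_mono hsubG))
  intro n
  rcases le_or_gt N (n:ℕ) with h | h
  · exact le_trans (min_le_left _ _) (hcount n h)
  · refine le_trans (min_le_right _ _) ?_
    have h1 : 1 ≤ maxCountN core (n:ℕ) := one_le_mcN hs hs1 n.pos
    have h1R : (1:ℝ) ≤ (maxCountN core (n:ℕ) : ℝ) := by exact_mod_cast h1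
    have hnpos : (0:ℝ) < (n:ℕ) := by exact_mod_cast n.pos
    calc 1/(N:ℝ) ≤ 1/((n:ℕ):ℝ) :=
          one_div_le_one_div_of_le hnpos (by exact_mod_cast h.le)
      _ ≤ (maxCountN core (n:ℕ) : ℝ)/((n:ℕ):ℝ) := by gcongr
end

section
/- Let A, B ⊆ ℤ with upper Banach densities BD(A) = α > 0 and BD(B) = β > 0. Then there exists a finite set F ⊆ ℤ with |F| ≤ 1/(αβ) such that (A − B) + F is thick. -/
open Filter Set Pointwise

/-- count of `E` in the window `(a, a+m]`. -/
noncomputable def cnt (E : Set ℤ) (a : ℤ) (m : ℕ) : ℕ :=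
  (E ∩ Set.Icc (a + 1) (a + (m : ℤ))).ncard

lemma cnt_eq (E : Set ℤ) (a : ℤ) (m : ℕ) [DecidablePred (· ∈ E)] :
    cnt E a m = ((Finset.Icc (a + 1) (a + (m : ℤ))).filter (· ∈ E)).card := by
  rw [← Set.ncard_coe_finset]
  unfold cnt
  congr 1
  ext z
  simp only [Set.mem_inter_iff, Set.mem_Icc, Finset.coe_filter, Finset.mem_Icc, Set.mem_setOf_eq]
  tauto

lemma cnt_zero (E : Set ℤ) (a : ℤ) : cnt E a 0 = 0 := by
  unfold cnt
  simp

lemma cnt_le (E : Set ℤ) (a : ℤ) (m : ℕ) : cnt E a m ≤ m := by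
  unfold cnt
  have h1 : (E ∩ Set.Icc (a + 1) (a + (m : ℤ))).ncard ≤ (Set.Icc (a+1) (a + (m:ℤ))).ncard :=
    Set.ncard_le_ncard Set.inter_subset_right (Set.finite_Icc _ _)
  refine h1.trans ?_
  rw [← Finset.coe_Icc, Set.ncard_coe_finset, Int.card_Icc]
  omega

lemma cnt_add (E : Set ℤ) (a : ℤ) (m l : ℕ) :
    cnt E a (m + l) = cnt E a m + cnt E (a + (m : ℤ)) l := by
  classical
  have hicc : Finset.Icc (a + 1) (a + ((m + l : ℕ) : ℤ)) =
      Finset.Icc (a + 1) (a + (m : ℤ)) ∪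
        Finset.Icc ((a + (m : ℤ)) + 1) ((a + (m : ℤ)) + (l : ℤ)) := by
    ext z
    simp only [Finset.mem_union, Finset.mem_Icc]
    omega
  have hdisj : Disjoint ((Finset.Icc (a + 1) (a + (m : ℤ))).filter (· ∈ E))
      (((Finset.Icc ((a + (m : ℤ)) + 1) ((a + (m : ℤ)) + (l : ℤ)))).filter (· ∈ E)) := by
    refine Finset.disjoint_filter_filter ?_
    rw [Finset.disjoint_left]
    intro z hz hz'
    simp only [Finset.mem_Icc] at hz hz'
    omega
  rw [cnt_eq, cnt_eq, cnt_eq, hicc, Finset.filter_union, Finset.card_union_of_disjoint hdisj]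

lemma cnt_congr (E E' : Set ℤ) (a : ℤ) (m : ℕ)
    (h : ∀ z ∈ Finset.Icc (a + 1) (a + (m : ℤ)), (z ∈ E ↔ z ∈ E')) :
    cnt E a m = cnt E' a m := by
  classical
  rw [cnt_eq, cnt_eq]
  congr 1
  exact Finset.filter_congr (by intro z hz; simp [h z hz])

lemma cnt_shift (E : Set ℤ) (s a : ℤ) (m : ℕ) :
    cnt {z : ℤ | s + z ∈ E} a m = cnt E (s + a) m := by
  classical
  rw [cnt_eq, cnt_eq]
  refine Finset.card_nbij' (fun z => s + z) (fun w => w - s) ?_ ?_ ?_ ?_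
  · intro z hz
    simp only [Finset.mem_coe, Finset.mem_filter, Finset.mem_Icc, Set.mem_setOf_eq] at hz ⊢
    constructor
    · omega
    · exact hz.2
  · intro w hw
    simp only [Finset.mem_coe, Finset.mem_filter, Finset.mem_Icc, Set.mem_setOf_eq] at hw ⊢
    constructor
    · omega
    · have : s + (w - s) = w := by ring
      rw [this]; exact hw.2
  · intro z _; ring
  · intro w _; ring

lemma cnt_pos_elim (E : Set ℤ) (a : ℤ) (m : ℕ) (h : 0 < cnt E a m) : ∃ z, z ∈ E := by
  classical
  rw [cnt_eq] at h
  obtain ⟨z, hz⟩ := Finset.card_pos.mp h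
  exact ⟨z, (Finset.mem_filter.mp hz).2⟩

lemma maxCount_mem (E : Set ℤ) (n : ℕ) : ∃ x : ℤ, maxCount E n = cnt E x n := by
  have hne : {c : ℕ | ∃ x : ℤ, c = (E ∩ Set.Icc (x + 1) (x + n)).ncard}.Nonempty :=
    ⟨(E ∩ Set.Icc ((0:ℤ) + 1) (0 + n)).ncard, 0, rfl⟩
  have hbdd : BddAbove {c : ℕ | ∃ x : ℤ, c = (E ∩ Set.Icc (x + 1) (x + n)).ncard} := by
    refine ⟨n, ?_⟩
    rintro c ⟨x, rfl⟩
    exact cnt_le E x n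
  have := Nat.sSup_mem hne hbdd
  obtain ⟨x, hx⟩ := this
  exact ⟨x, hx⟩

lemma maxCount_le (E : Set ℤ) (n : ℕ) : maxCount E n ≤ n := by
  obtain ⟨x, hx⟩ := maxCount_mem E n
  rw [hx]; exact cnt_le E x n

lemma BD_le (E : Set ℤ) (n : ℕ+) : BD E ≤ (maxCount E (n : ℕ) : ℝ) / (n : ℕ) := by
  refine ciInf_le ⟨0, ?_⟩ n
  rintro y ⟨k, rfl⟩
  positivity

lemma BD_le_one (E : Set ℤ) : BD E ≤ 1 := by
  have h := BD_le E 1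
  have h2 : maxCount E 1 ≤ 1 := maxCount_le E 1
  have : (maxCount E (1:ℕ+) : ℝ) ≤ 1 := by exact_mod_cast h2
  simpa using h.trans (by simpa using this)

lemma BD_window (E : Set ℤ) (m : ℕ) : ∃ p : ℤ, BD E * m ≤ cnt E p m := by
  rcases Nat.eq_zero_or_pos m with hm | hm
  · exact ⟨0, by simp [hm]⟩
  · obtain ⟨x, hx⟩ := maxCount_mem E m
    refine ⟨x, ?_⟩
    have h := BD_le E ⟨m, hm⟩
    have hm' : (0:ℝ) < (m : ℝ) := by exact_mod_cast hm
    have h' : BD E * m ≤ (maxCount E m : ℝ) := (le_div_iff₀ hm').mp h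
    rw [hx] at h'
    exact h'

lemma prefix_lemma (E : Set ℤ) (δ ε : ℝ) (hε : 0 < ε) (hεδ : ε ≤ δ) (hδ1 : δ ≤ 1)
    (n : ℕ) (p : ℤ) (h : δ * n ≤ cnt E p n) :
    ∃ (r : ℤ) (M : ℕ), ε * n ≤ M ∧ ∀ m ≤ M, (δ - ε) * m ≤ cnt E r m := by
  classical
  set φ : ℕ → ℝ := fun j => (cnt E p j : ℝ) - (δ - ε) * j with hφ
  obtain ⟨j₀, hj₀mem, hj₀min⟩ :=
    (Finset.range (n + 1)).exists_min_image φ ⟨0, by simp⟩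
  simp only [Finset.mem_range] at hj₀mem
  have hj₀n : j₀ ≤ n := by omega
  refine ⟨p + j₀, n - j₀, ?_, ?_⟩
  · -- ε * n ≤ n - j₀
    have h0 : φ j₀ ≤ φ 0 := hj₀min 0 (by simp)
    have hφ0 : φ 0 = 0 := by simp [hφ, cnt_zero]
    have hsplit : cnt E p n = cnt E p j₀ + cnt E (p + (j₀ : ℤ)) (n - j₀) := by
      have := cnt_add E p j₀ (n - j₀)
      rwa [Nat.add_sub_cancel' hj₀n] at this
    have hle : (cnt E (p + (j₀ : ℤ)) (n - j₀) : ℝ) ≤ (n - j₀ : ℕ) := by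
      exact_mod_cast cnt_le E _ _
    have hj0le : (cnt E p j₀ : ℝ) ≤ (δ - ε) * j₀ := by
      have := h0
      rw [hφ0] at this
      simp only [hφ] at this
      linarith
    have hcnt : (cnt E p n : ℝ) = (cnt E p j₀ : ℝ) + (cnt E (p + (j₀:ℤ)) (n - j₀) : ℝ) := by
      exact_mod_cast hsplit
    have hδε : 0 ≤ δ - ε := by linarith
    have hM : ((n - j₀ : ℕ) : ℝ) = (n : ℝ) - (j₀ : ℝ) := by
      push_cast [Nat.cast_sub hj₀n]; ring
    have hprod : 0 ≤ (δ - ε) * ((n : ℝ) - (j₀ : ℝ)) := by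
      apply mul_nonneg hδε
      have : (j₀ : ℝ) ≤ (n : ℝ) := by exact_mod_cast hj₀n
      linarith
    rw [hM] at hle ⊢
    nlinarith [hprod]
  · intro m hm
    have hmem : j₀ + m < n + 1 := by omega
    have hmin := hj₀min (j₀ + m) (Finset.mem_range.mpr hmem)
    have hsplit : cnt E p (j₀ + m) = cnt E p j₀ + cnt E (p + (j₀ : ℤ)) m := cnt_add E p j₀ m
    simp only [hφ] at hmin
    have hcast : (cnt E p (j₀ + m) : ℝ) = (cnt E p j₀ : ℝ) + (cnt E (p + (j₀:ℤ)) m : ℝ) := by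
      exact_mod_cast hsplit
    push_cast at hmin
    linarith

def limSet (S : ℕ → Set ℤ) (U : Ultrafilter ℕ) : Set ℤ := {z | {j | z ∈ S j} ∈ U}

lemma limSet_agree (S : ℕ → Set ℤ) (U : Ultrafilter ℕ) (G : Finset ℤ) :
    {j | ∀ z ∈ G, (z ∈ limSet S U ↔ z ∈ S j)} ∈ U := by
  classical
  induction G using Finset.induction with
  | empty => exact Filter.mem_of_superset Filter.univ_mem (by intro j _; simp)
  | @insert z G hz ih =>
    have h1 : {j | z ∈ limSet S U ↔ z ∈ S j} ∈ U := by
      by_cases hc : z ∈ limSet S U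
      · refine Filter.mem_of_superset hc ?_
        intro j hj
        exact ⟨fun _ => hj, fun _ => hc⟩
      · have hcc : {j | z ∈ S j}ᶜ ∈ U := (Ultrafilter.compl_mem_iff_notMem).mpr hc
        refine Filter.mem_of_superset hcc ?_
        intro j hj
        exact ⟨fun h => absurd h hc, fun h => absurd h hj⟩
    have := Filter.inter_mem h1 ih
    refine Filter.mem_of_superset this ?_
    rintro j ⟨hj1, hj2⟩
    intro w hw
    rcases Finset.mem_insert.mp hw with rfl | hw'
    · exact hj1
    · exact hj2 w hw'

lemma step_counting (A C : Set ℤ) (a b e : ℝ) (he : 0 < e) (ha0 : 0 ≤ a) (ha1 : a ≤ 1)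
    (hb0 : 0 ≤ b) (hb1 : b ≤ 1)
    (hC : ∀ m : ℕ, b * m ≤ cnt C 0 m)
    (hA : ∀ m : ℕ, ∃ p : ℤ, a * m ≤ cnt A p m) :
    ∀ m : ℕ, ∃ u p : ℤ, (a * b - e) * m ≤ cnt (A ∩ {z | z - u ∈ C}) p m := by
  classical
  intro m
  by_cases htriv : a * b - e ≤ 0
  · refine ⟨0, 0, ?_⟩
    have h1 : (0:ℝ) ≤ (cnt (A ∩ {z | z - (0:ℤ) ∈ C}) 0 m : ℝ) := by positivity
    have h2 : (a*b - e) * m ≤ 0 := mul_nonpos_of_nonpos_of_nonneg htriv (by positivity)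
    linarith
  push_neg at htriv
  have hbpos : 0 < b := by nlinarith
  rcases Nat.eq_zero_or_pos m with hm0 | hm1
  · exact ⟨0, 0, by simp [hm0]⟩
  have hm1r : (1:ℝ) ≤ (m:ℝ) := by exact_mod_cast hm1
  obtain ⟨n, hn⟩ := exists_nat_gt (max ((m:ℝ)*m/e) ((m:ℝ)/b))
  have hnpos : 0 < n := by
    have h0 : (0:ℝ) ≤ max ((m:ℝ)*m/e) ((m:ℝ)/b) := le_max_of_le_left (by positivity)
    have : (0:ℝ) < (n:ℝ) := lt_of_le_of_lt h0 hn
    exact_mod_cast this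
  have hmbn : (m:ℝ) < n * b := (div_lt_iff₀ hbpos).mp (lt_of_le_of_lt (le_max_right _ _) hn)
  have hmme : (m:ℝ)*m < n * e := (div_lt_iff₀ he).mp (lt_of_le_of_lt (le_max_left _ _) hn)
  obtain ⟨p, hp⟩ := hA m
  set R : Finset ℤ := Finset.Icc (p - n + 1) p with hR
  have hRcard : R.card = n := by rw [hR, Int.card_Icc]; omega
  have hRne : R.Nonempty := Finset.card_pos.mp (by omega)
  set I : Finset ℤ := Finset.Icc (p + 1) (p + (m:ℤ)) with hI
  -- per-x window identification
  have hxcnt : ∀ x ∈ I, (R.filter (fun u => x - u ∈ C)).card = cnt C (x - p - 1) n := by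
    intro x hx
    rw [cnt_eq]
    refine Finset.card_nbij' (fun u => x - u) (fun w => x - w) ?_ ?_ ?_ ?_
    · intro u hu
      simp only [hR, Finset.mem_coe, Finset.mem_filter, Finset.mem_Icc] at hu ⊢
      exact ⟨by omega, hu.2⟩
    · intro w hw
      simp only [hR, Finset.mem_coe, Finset.mem_filter, Finset.mem_Icc] at hw ⊢
      have hxw : x - (x - w) = w := by ring
      exact ⟨by omega, by rw [hxw]; exact hw.2⟩
    · intro u _; ring
    · intro w _; ring
  -- per-x lower bound
  have hxlow : ∀ x ∈ I, b * n - m ≤ ((R.filter (fun u => x - u ∈ C)).card : ℝ) := by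
    intro x hx
    rw [hxcnt x hx]
    have hxI : p + 1 ≤ x ∧ x ≤ p + (m:ℤ) := by simpa [hI, Finset.mem_Icc] using hx
    set y : ℕ := (x - p - 1).toNat with hy
    have hyz : (y : ℤ) = x - p - 1 := by omega
    have hym : (y:ℝ) ≤ (m:ℝ) := by
      have : (y:ℤ) ≤ (m:ℤ) := by omega
      exact_mod_cast this
    have hsplit := cnt_add C 0 y n
    have h0y : (0:ℤ) + (y:ℤ) = x - p - 1 := by omega
    rw [h0y] at hsplit
    have hcast : (cnt C 0 (y+n) : ℝ) = (cnt C 0 y : ℝ) + (cnt C (x-p-1) n : ℝ) := by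
      exact_mod_cast hsplit
    have h1 : b * ((y:ℝ) + (n:ℝ)) ≤ (cnt C 0 (y+n) : ℝ) := by
      have := hC (y + n)
      push_cast at this
      linarith
    have h2 : (cnt C 0 y : ℝ) ≤ (y:ℝ) := by exact_mod_cast cnt_le C 0 y
    have hby : 0 ≤ b * (y:ℝ) := mul_nonneg hb0 (by positivity)
    nlinarith
  -- double counting
  have hcnt_filter : ∀ u : ℤ, cnt (A ∩ {z | z - u ∈ C}) p m
      = (I.filter (fun x => x ∈ A ∧ x - u ∈ C)).card := by
    intro u
    rw [cnt_eq]
    congr 1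
  have hdc : ∑ u ∈ R, cnt (A ∩ {z | z - u ∈ C}) p m
      = ∑ x ∈ I.filter (· ∈ A), (R.filter (fun u => x - u ∈ C)).card := by
    calc ∑ u ∈ R, cnt (A ∩ {z | z - u ∈ C}) p m
        = ∑ u ∈ R, ∑ x ∈ I, (if x ∈ A ∧ x - u ∈ C then 1 else 0) := by
          refine Finset.sum_congr rfl ?_
          intro u _
          rw [hcnt_filter u, Finset.card_filter]
      _ = ∑ x ∈ I, ∑ u ∈ R, (if x ∈ A ∧ x - u ∈ C then 1 else 0) := Finset.sum_comm
      _ = ∑ x ∈ I, (if x ∈ A then (R.filter (fun u => x - u ∈ C)).card else 0) := by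
          refine Finset.sum_congr rfl ?_
          intro x _
          by_cases hxA : x ∈ A
          · simp only [hxA, true_and, if_true, Finset.card_filter]
          · simp [hxA]
      _ = ∑ x ∈ I.filter (· ∈ A), (R.filter (fun u => x - u ∈ C)).card :=
          (Finset.sum_filter _ _).symm
  have hAcard : (I.filter (· ∈ A)).card = cnt A p m := (cnt_eq A p m).symm
  have hlow : (cnt A p m : ℝ) * (b*n - m) ≤ ((∑ u ∈ R, cnt (A ∩ {z | z - u ∈ C}) p m : ℕ) : ℝ) := by
    rw [hdc]
    push_cast
    calc (cnt A p m : ℝ) * (b*n - m)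
        = ∑ _x ∈ I.filter (· ∈ A), (b*n - m) := by
          rw [Finset.sum_const, hAcard, nsmul_eq_mul]
      _ ≤ ∑ x ∈ I.filter (· ∈ A), ((R.filter (fun u => x - u ∈ C)).card : ℝ) :=
          Finset.sum_le_sum (fun x hx => hxlow x (Finset.filter_subset _ _ hx))
  -- extract a good u
  by_contra hcon
  push_neg at hcon
  have hub : ((∑ u ∈ R, cnt (A ∩ {z | z - u ∈ C}) p m : ℕ) : ℝ) < (n:ℝ) * ((a*b - e)*m) := by
    push_cast
    have := Finset.sum_lt_sum_of_nonempty hRne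
      (f := fun u => ((cnt (A ∩ {z | z - u ∈ C}) p m : ℕ) : ℝ))
      (g := fun _ => (a*b - e)*m) (fun u _ => hcon u p)
    calc (∑ u ∈ R, ((cnt (A ∩ {z | z - u ∈ C}) p m : ℕ) : ℝ))
        < ∑ _u ∈ R, ((a*b - e)*m) := this
      _ = (n:ℝ) * ((a*b - e)*m) := by rw [Finset.sum_const, hRcard, nsmul_eq_mul]
  have h1 : a*(m:ℝ)*(b*n - m) ≤ (cnt A p m : ℝ)*(b*n - m) :=
    mul_le_mul_of_nonneg_right hp (by linarith)
  have hkey : (n:ℝ)*e*(m:ℝ) < a*(m:ℝ)*(m:ℝ) := by nlinarith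
  have c1 : a*(m:ℝ)*(m:ℝ) ≤ (m:ℝ)*(m:ℝ) := by nlinarith
  have c2 : (m:ℝ)*(m:ℝ) ≤ (m:ℝ)*(m:ℝ)*(m:ℝ) := by nlinarith
  have c3 : (m:ℝ)*(m:ℝ)*(m:ℝ) < e*(n:ℝ)*(m:ℝ) := by nlinarith
  linarith


set_option maxHeartbeats 1000000 in
theorem jin_with_bound (A B : Set ℤ) (α β : ℝ) (hA : BD A = α) (hB : BD B = β)
    (hα : 0 < α) (hβ : 0 < β) :
    ∃ F : Finset ℤ, (F.card : ℝ) ≤ 1 / (α * β) ∧ Thick ((A - B) + (F : Set ℤ)) := by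
  classical
  have hα1 : α ≤ 1 := hA ▸ BD_le_one A
  have hβ1 : β ≤ 1 := hB ▸ BD_le_one B
  have hαβ : 0 < α * β := mul_pos hα hβ
  have hαβ1 : α * β ≤ 1 := mul_le_one₀ hα1 hβ.le hβ1
  set N : ℕ := ⌊1 / (α * β)⌋₊ with hN
  have hNlt : 1 / (α * β) < (N : ℝ) + 1 := Nat.lt_floor_add_one _
  have hNpos : (0:ℝ) < (N : ℝ) + 1 := by positivity
  have h1 : 1 < ((N:ℝ) + 1) * (α * β) := (div_lt_iff₀ hαβ).mp hNlt
  have hN1 : 1 / ((N:ℝ) + 1) < α * β := (div_lt_iff₀ hNpos).mpr (by nlinarith)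
  set e : ℝ := (α * β - 1 / ((N:ℝ) + 1)) / 4 with he_def
  have hNinv : 0 < 1 / ((N:ℝ)+1) := by positivity
  have he : 0 < e := by rw [he_def]; linarith
  have he4 : 4 * e = α * β - 1 / ((N:ℝ)+1) := by rw [he_def]; ring
  have heαβ : 4 * e < α * β := by linarith
  have hβle : α * β ≤ β := by nlinarith
  have heβ : e ≤ β := by linarith
  set κ : ℝ := α * β - 3 * e with hκdef
  have hκpos : 0 < κ := by rw [hκdef]; linarith
  have hκN : 1 / ((N:ℝ)+1) < κ := by rw [hκdef]; linarith
  have hκ1 : κ ≤ 1 := by rw [hκdef]; linarith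
  -- ultrafilter
  set U : Ultrafilter ℕ := hyperfilter ℕ with hU
  have hUcof : ∀ m : ℕ, {j : ℕ | m ≤ j} ∈ U := by
    intro m
    apply Filter.mem_hyperfilter_of_finite_compl
    refine Set.Finite.subset (Set.finite_lt_nat m) ?_
    intro j hj
    simp only [Set.mem_compl_iff, Set.mem_setOf_eq, not_le] at hj ⊢
    exact hj
  -- B-side limit set
  have hBwin : ∀ i : ℕ, ∃ q : ℤ, β * i ≤ cnt B q i := by
    intro i; obtain ⟨q, hq⟩ := BD_window B i; exact ⟨q, by rwa [hB] at hq⟩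
  have hBpre : ∀ i : ℕ, ∃ (r : ℤ) (M : ℕ), e * i ≤ M ∧ ∀ m ≤ M, (β - e) * m ≤ cnt B r m := by
    intro i; obtain ⟨q, hq⟩ := hBwin i
    exact prefix_lemma B β e he heβ hβ1 i q hq
  choose rB MB hMB1 hMB2 using hBpre
  set C : Set ℤ := limSet (fun i => {z | rB i + z ∈ B}) U with hCdef
  have hCdens : ∀ m : ℕ, (β - e) * m ≤ cnt C 0 m := by
    intro m
    have hgood : {i : ℕ | (β - e) * m ≤ (cnt B (rB i) m : ℝ)} ∈ U := by
      refine Filter.mem_of_superset (hUcof (Nat.ceil ((m:ℝ)/e))) ?_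
      intro i hi
      simp only [Set.mem_setOf_eq] at hi ⊢
      have h1' : ((m:ℝ)/e) ≤ (Nat.ceil ((m:ℝ)/e) : ℝ) := Nat.le_ceil _
      have h2' : ((Nat.ceil ((m:ℝ)/e) : ℕ) : ℝ) ≤ (i:ℝ) := by exact_mod_cast hi
      rw [div_le_iff₀ he] at h1'
      have h3' : ((Nat.ceil ((m:ℝ)/e) : ℕ) : ℝ) * e ≤ (i:ℝ) * e :=
        mul_le_mul_of_nonneg_right h2' he.le
      have hmi : (m:ℝ) ≤ e * i := by nlinarith
      have hmM : m ≤ MB i := by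
        have h4' := hMB1 i
        have h5' : (m:ℝ) ≤ (MB i : ℝ) := by linarith
        exact_mod_cast h5'
      exact hMB2 i m hmM
    have hag := limSet_agree (fun i => {z | rB i + z ∈ B}) U (Finset.Icc ((0:ℤ)+1) (0+(m:ℤ)))
    obtain ⟨i, hi⟩ := Filter.nonempty_of_mem (Filter.inter_mem hag hgood)
    have hcc : cnt C 0 m = cnt B (rB i) m := by
      have h1' : cnt C 0 m = cnt {z | rB i + z ∈ B} 0 m :=
        cnt_congr _ _ 0 m (fun z hz => hi.1 z hz)
      rw [h1', cnt_shift, add_zero]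
    rw [hcc]; exact hi.2
  have hCsub : ∀ G : Finset ℤ, (∀ z ∈ G, z ∈ C) → ∃ s : ℤ, ∀ z ∈ G, s + z ∈ B := by
    intro G hG
    obtain ⟨i, hi⟩ := Filter.nonempty_of_mem (limSet_agree (fun i => {z | rB i + z ∈ B}) U G)
    exact ⟨rB i, fun z hz => (hi z hz).mp (hG z hz)⟩
  -- A-side and counting
  have hAwin : ∀ m : ℕ, ∃ p : ℤ, α * m ≤ cnt A p m := by
    intro m; obtain ⟨p, hp⟩ := BD_window A m; exact ⟨p, by rwa [hA] at hp⟩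
  set δB : ℝ := α * (β - e) - e with hδBdef
  have hαe : α * e ≤ e := by nlinarith
  have hδBκ : κ ≤ δB - e := by rw [hδBdef, hκdef]; nlinarith
  have hδB1 : δB ≤ 1 := by rw [hδBdef]; nlinarith
  have heδB : e ≤ δB := by rw [hδBdef]; nlinarith
  have hstepB := step_counting A C α (β - e) e he hα.le hα1 (by linarith) (by linarith)
    hCdens hAwin
  choose uu pp hup using hstepB
  have hpre2 : ∀ j : ℕ, ∃ (r : ℤ) (M : ℕ), e * j ≤ M ∧
      ∀ m ≤ M, (δB - e) * m ≤ cnt (A ∩ {z | z - uu j ∈ C}) r m := by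
    intro j
    exact prefix_lemma _ δB e he heδB hδB1 j (pp j) (hup j)
  choose ρ Mρ hMρ1 hMρ2 using hpre2
  set Sf : ℕ → Set ℤ := fun j => {z | ρ j + z ∈ A ∩ {w | w - uu j ∈ C}} with hSf
  set Cs : Set ℤ := limSet Sf U with hCs
  have hCsdens : ∀ m : ℕ, κ * m ≤ cnt Cs 0 m := by
    intro m
    have hgood : {j : ℕ | (δB - e) * m ≤ (cnt (A ∩ {z | z - uu j ∈ C}) (ρ j) m : ℝ)} ∈ U := by
      refine Filter.mem_of_superset (hUcof (Nat.ceil ((m:ℝ)/e))) ?_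
      intro j hj
      simp only [Set.mem_setOf_eq] at hj ⊢
      have h1' : ((m:ℝ)/e) ≤ (Nat.ceil ((m:ℝ)/e) : ℝ) := Nat.le_ceil _
      have h2' : ((Nat.ceil ((m:ℝ)/e) : ℕ) : ℝ) ≤ (j:ℝ) := by exact_mod_cast hj
      rw [div_le_iff₀ he] at h1'
      have h3' : ((Nat.ceil ((m:ℝ)/e) : ℕ) : ℝ) * e ≤ (j:ℝ) * e :=
        mul_le_mul_of_nonneg_right h2' he.le
      have hmi : (m:ℝ) ≤ e * j := by nlinarith
      have hmM : m ≤ Mρ j := by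
        have h4' := hMρ1 j
        have h5' : (m:ℝ) ≤ (Mρ j : ℝ) := by linarith
        exact_mod_cast h5'
      exact hMρ2 j m hmM
    have hag := limSet_agree Sf U (Finset.Icc ((0:ℤ)+1) (0+(m:ℤ)))
    obtain ⟨j, hj⟩ := Filter.nonempty_of_mem (Filter.inter_mem hag hgood)
    have hcc : cnt Cs 0 m = cnt (A ∩ {z | z - uu j ∈ C}) (ρ j) m := by
      have h1' : cnt Cs 0 m = cnt (Sf j) 0 m := cnt_congr _ _ 0 m (fun z hz => hj.1 z hz)
      rw [h1']
      have h2' : Sf j = {z | ρ j + z ∈ (A ∩ {w | w - uu j ∈ C})} := rfl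
      rw [h2', cnt_shift, add_zero]
    rw [hcc]
    have hmono : κ * m ≤ (δB - e) * m := mul_le_mul_of_nonneg_right hδBκ (by positivity)
    have hj2 : (δB - e) * (m:ℝ) ≤ (cnt (A ∩ {z | z - uu j ∈ C}) (ρ j) m : ℝ) := hj.2
    linarith
  have hCssub : ∀ G : Finset ℤ, (∀ z ∈ G, z ∈ Cs) →
      ∃ j : ℕ, ∀ z ∈ G, (ρ j + z ∈ A ∧ (ρ j + z) - uu j ∈ C) := by
    intro G hG
    obtain ⟨j, hj⟩ := Filter.nonempty_of_mem (limSet_agree Sf U G)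
    exact ⟨j, fun z hz => (hj z hz).mp (hG z hz)⟩
  -- Cs is nonempty
  have hCsne : ∃ c₀, c₀ ∈ Cs := by
    have h1' := hCsdens 1
    have h2' : 0 < cnt Cs 0 1 := by
      by_contra hcon
      push_neg at hcon
      have h3' : cnt Cs 0 1 = 0 := Nat.le_zero.mp hcon
      rw [h3'] at h1'
      push_cast at h1'
      linarith
    exact cnt_pos_elim _ _ _ h2'
  obtain ⟨c₀, hc₀⟩ := hCsne
  set sep : Finset ℤ → Prop :=
    fun F => ∀ x ∈ F, ∀ y ∈ F, x ≠ y → ∀ c ∈ Cs, ∀ c' ∈ Cs, x - y ≠ c - c' with hsepdef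
  -- shifted counts
  have hshift : ∀ (x : ℤ) (m : ℕ), |x| ≤ (m:ℤ) →
      κ * m - ((|x| : ℤ) : ℝ) ≤ (cnt Cs (-x) m : ℝ) := by
    intro x m hxm
    rcases le_or_gt 0 x with hx0 | hx0
    · have habs0 : |x| = x := abs_of_nonneg hx0
      set aN : ℕ := x.toNat with haN
      have hax : (aN:ℤ) = x := Int.toNat_of_nonneg hx0
      have haxm : aN ≤ m := by omega
      have hsplit := cnt_add Cs (-x) aN (m - aN)
      have hmm : aN + (m - aN) = m := by omega
      rw [hmm] at hsplit
      have h0 : -x + (aN:ℤ) = 0 := by omega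
      rw [h0] at hsplit
      have hdens := hCsdens (m - aN)
      have hcastm : ((m - aN : ℕ) : ℝ) = (m:ℝ) - (aN:ℝ) := by
        push_cast [Nat.cast_sub haxm]; ring
      have hc2 : (cnt Cs (-x) m : ℝ) = (cnt Cs (-x) aN : ℝ) + (cnt Cs 0 (m - aN) : ℝ) := by
        exact_mod_cast hsplit
      rw [hcastm] at hdens
      have hκa : κ * (aN:ℝ) ≤ (aN:ℝ) := mul_le_of_le_one_left (by positivity) hκ1
      have habsr : ((|x|:ℤ):ℝ) = (aN:ℝ) := by exact_mod_cast (by omega : (|x|:ℤ) = (aN:ℤ))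
      rw [habsr]
      have hnn : (0:ℝ) ≤ (cnt Cs (-x) aN : ℝ) := by positivity
      nlinarith
    · have habs0 : |x| = -x := abs_of_nonpos hx0.le
      set aN : ℕ := (-x).toNat with haN
      have hax : (aN:ℤ) = -x := Int.toNat_of_nonneg (by omega)
      have hsplit := cnt_add Cs 0 aN m
      have h0 : (0:ℤ) + (aN:ℤ) = -x := by omega
      rw [h0] at hsplit
      have hd1 := hCsdens (aN + m)
      have hd2 : (cnt Cs 0 aN : ℝ) ≤ (aN:ℝ) := by exact_mod_cast cnt_le Cs 0 aN
      have hcast2 : (cnt Cs 0 (aN + m) : ℝ) = (cnt Cs 0 aN : ℝ) + (cnt Cs (-x) m : ℝ) := by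
        exact_mod_cast hsplit
      have habsr : ((|x|:ℤ):ℝ) = (aN:ℝ) := by exact_mod_cast (by omega : (|x|:ℤ) = (aN:ℤ))
      rw [habsr]
      push_cast at hd1
      have hκa : 0 ≤ κ * (aN:ℝ) := by positivity
      linarith
  -- disjoint translates count
  have hdisj : ∀ F : Finset ℤ, sep F → ∀ m : ℕ, ∑ x ∈ F, cnt Cs (-x) m ≤ m := by
    intro F hsep m
    set t : ℤ → Finset ℤ := fun x => (Finset.Icc (1:ℤ) (m:ℤ)).filter (fun z => z - x ∈ Cs) with ht
    have hteq : ∀ x : ℤ, cnt Cs (-x) m = (t x).card := by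
      intro x
      rw [cnt_eq]
      refine Finset.card_nbij' (fun z => z + x) (fun w => w - x) ?_ ?_ ?_ ?_
      · intro z hz
        simp only [ht, Finset.mem_coe, Finset.mem_filter, Finset.mem_Icc] at hz ⊢
        refine ⟨by omega, ?_⟩
        have hzz : z + x - x = z := by ring
        rw [hzz]; exact hz.2
      · intro w hw
        simp only [ht, Finset.mem_coe, Finset.mem_filter, Finset.mem_Icc] at hw ⊢
        exact ⟨by omega, hw.2⟩
      · intro z _; ring
      · intro w _; ring
    have hdisj2 : ∀ x ∈ F, ∀ y ∈ F, x ≠ y → Disjoint (t x) (t y) := by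
      intro x hx y hy hxy
      rw [Finset.disjoint_left]
      intro z hzx hzy
      simp only [ht, Finset.mem_filter] at hzx hzy
      exact hsep x hx y hy hxy (z - y) hzy.2 (z - x) hzx.2 (by ring)
    calc ∑ x ∈ F, cnt Cs (-x) m = ∑ x ∈ F, (t x).card :=
          Finset.sum_congr rfl (fun x _ => hteq x)
      _ = (F.biUnion t).card := (Finset.card_biUnion hdisj2).symm
      _ ≤ (Finset.Icc (1:ℤ) (m:ℤ)).card :=
          Finset.card_le_card (Finset.biUnion_subset.mpr (fun x _ => Finset.filter_subset _ _))
      _ = m := by rw [Int.card_Icc]; omega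
  -- separated sets are small
  have hsepcard : ∀ F : Finset ℤ, sep F → F.card ≤ N := by
    intro F hsep
    have hcard1 : (F.card : ℝ) * κ ≤ 1 := by
      by_contra hgt
      push_neg at hgt
      set X : ℝ := ∑ x ∈ F, ((|x|:ℤ):ℝ) with hX
      have hX0 : 0 ≤ X := Finset.sum_nonneg (fun x _ => by positivity)
      have hXx : ∀ x ∈ F, ((|x|:ℤ):ℝ) ≤ X := fun x hx =>
        Finset.single_le_sum (f := fun y : ℤ => ((|y|:ℤ):ℝ)) (fun y _ => by positivity) hx
      have hpos : 0 < (F.card:ℝ) * κ - 1 := by linarith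
      obtain ⟨m, hm⟩ := exists_nat_gt (max X (X / ((F.card:ℝ) * κ - 1)))
      have hmX : X < (m:ℝ) := lt_of_le_of_lt (le_max_left _ _) hm
      have hsum := hdisj F hsep m
      have hlow2 : ∀ x ∈ F, κ * m - ((|x|:ℤ):ℝ) ≤ (cnt Cs (-x) m : ℝ) := by
        intro x hx
        apply hshift
        have h6' := hXx x hx
        have h7' : ((|x|:ℤ):ℝ) < (m:ℝ) := by linarith
        exact_mod_cast h7'.le
      have h1' : ∑ x ∈ F, (κ * m - ((|x|:ℤ):ℝ)) ≤ ∑ x ∈ F, (cnt Cs (-x) m : ℝ) :=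
        Finset.sum_le_sum hlow2
      have h2' : ∑ x ∈ F, (cnt Cs (-x) m : ℝ) ≤ (m:ℝ) := by exact_mod_cast hsum
      have h3' : ∑ x ∈ F, (κ * m - ((|x|:ℤ):ℝ)) = (F.card:ℝ) * (κ * m) - X := by
        rw [Finset.sum_sub_distrib, Finset.sum_const, nsmul_eq_mul]
      have hmb : X / ((F.card:ℝ) * κ - 1) < (m:ℝ) := lt_of_le_of_lt (le_max_right _ _) hm
      rw [div_lt_iff₀ hpos] at hmb
      nlinarith
    have hle1 : (F.card : ℝ) ≤ 1/κ := by rw [le_div_iff₀ hκpos]; exact hcard1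
    have h1κ : 1/κ < (N:ℝ) + 1 := by
      rw [div_lt_iff₀ hκpos]
      have := (div_lt_iff₀ hNpos).mp hκN
      nlinarith
    have hltN : (F.card : ℕ) < N + 1 := by exact_mod_cast lt_of_le_of_lt hle1 h1κ
    omega
  -- a maximal separated set
  set J : Set ℕ := {j | ∃ F : Finset ℤ, sep F ∧ F.card = j} with hJ
  have hJ0 : 0 ∈ J :=
    ⟨∅, fun x hx => absurd hx (Finset.notMem_empty x), Finset.card_empty⟩
  have hJbdd : BddAbove J := by
    refine ⟨N, ?_⟩
    rintro j ⟨F, hF1, rfl⟩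
    exact hsepcard F hF1
  have hJmem := Nat.sSup_mem ⟨0, hJ0⟩ hJbdd
  obtain ⟨F, hsepF, hcardF⟩ := hJmem
  have hcover : ∀ z : ℤ, ∃ f ∈ F, ∃ c ∈ Cs, ∃ c' ∈ Cs, z = c - c' + f := by
    intro z
    by_contra hno
    push_neg at hno
    have hzF : z ∉ F := fun hzF => hno z hzF c₀ hc₀ c₀ hc₀ (by ring)
    have hsep' : sep (insert z F) := by
      intro x hx y hy hxy c hc c' hc'
      rcases Finset.mem_insert.mp hx with rfl | hxF
      · rcases Finset.mem_insert.mp hy with rfl | hyF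
        · exact absurd rfl hxy
        · intro heq
          exact hno y hyF c hc c' hc' (by omega)
      · rcases Finset.mem_insert.mp hy with rfl | hyF
        · intro heq
          exact hno x hxF c' hc' c hc (by omega)
        · exact hsepF x hxF y hyF hxy c hc c' hc'
    have hmem : F.card + 1 ∈ J :=
      ⟨insert z F, hsep', by rw [Finset.card_insert_of_notMem hzF]⟩
    have hle : F.card + 1 ≤ sSup J := le_csSup hJbdd hmem
    omega
  refine ⟨F, ?_, ?_⟩
  · have h1' : F.card ≤ N := hsepcard F hsepF
    have h2' : (N:ℝ) ≤ 1/(α*β) := Nat.floor_le (by positivity)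
    have h3' : (F.card:ℝ) ≤ (N:ℝ) := by exact_mod_cast h1'
    linarith
  · intro k
    choose f hf c hc c' hc' hz using hcover
    set G : Finset ℤ := (Finset.Icc (1:ℤ) (k:ℤ)).image c ∪ (Finset.Icc (1:ℤ) (k:ℤ)).image c'
      with hG
    have hGsub : ∀ w ∈ G, w ∈ Cs := by
      intro w hw
      rcases Finset.mem_union.mp hw with hw' | hw'
      · obtain ⟨z, _, rfl⟩ := Finset.mem_image.mp hw'
        exact hc z
      · obtain ⟨z, _, rfl⟩ := Finset.mem_image.mp hw'
        exact hc' z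
    obtain ⟨j, hj⟩ := hCssub G hGsub
    set G' : Finset ℤ := G.image (fun w => (ρ j + w) - uu j) with hG'
    have hG'sub : ∀ w ∈ G', w ∈ C := by
      intro w hw
      obtain ⟨w0, hw0, rfl⟩ := Finset.mem_image.mp hw
      exact (hj w0 hw0).2
    obtain ⟨s, hs⟩ := hCsub G' hG'sub
    refine ⟨uu j - s, ?_⟩
    intro v hv
    simp only [Set.mem_Icc] at hv
    set z₀ : ℤ := v - (uu j - s) with hz₀
    have hz₀mem : z₀ ∈ Finset.Icc (1:ℤ) (k:ℤ) := by
      simp only [Finset.mem_Icc]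
      omega
    have hcmem : c z₀ ∈ G := Finset.mem_union_left _ (Finset.mem_image_of_mem c hz₀mem)
    have hc'mem : c' z₀ ∈ G := Finset.mem_union_right _ (Finset.mem_image_of_mem c' hz₀mem)
    have haz : ρ j + c z₀ ∈ A := (hj (c z₀) hcmem).1
    have hbz : s + ((ρ j + c' z₀) - uu j) ∈ B :=
      hs _ (Finset.mem_image_of_mem _ hc'mem)
    have hfz : f z₀ ∈ (F : Set ℤ) := hf z₀
    have hmem2 : ((ρ j + c z₀) - (s + ((ρ j + c' z₀) - uu j))) + f z₀ ∈ (A - B) + (F : Set ℤ) :=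
      Set.add_mem_add (Set.sub_mem_sub haz hbz) hfz
    have heq : ((ρ j + c z₀) - (s + ((ρ j + c' z₀) - uu j))) + f z₀ = v := by
      have hzz := hz z₀
      omega
    rw [← heq]
    exact hmem2
end
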